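/- arXiv:2106.00803 — 2 statements merged into one kernel-verified Lean document; each statement's English description precedes it below -/
import Mathlib

section
/- Let g ∈ ℚ[[q]], and let f, f̃ ∈ ℚ[[q]] both satisfy f(0) = 0, f'(0) ≠ 0 (respectively f̃(0) = 0, f̃'(0) ≠ 0) and the same Schwarzian equation S_q f + g = 0 = S_q f̃ + g. Then there exist a ∈ ℚ with a ≠ 0 and b ∈ ℚ such that f̃ = f/(a + b·f) (the denominator a + b·f being a unit of ℚ[[q]]). Thus a solution of a Schwarzian equation in the class f(0) = 0, f'(0) ≠ 0 is unique up to the transformations f ↦ f/(a + bf). -/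
/-- The formal derivative `df/dq` on `ℚ[[q]]`. -/
noncomputable def sder (f : PowerSeries ℚ) : PowerSeries ℚ := PowerSeries.derivative ℚ f

/-- The formal Schwarzian derivative
`S_q f = (f''/f')' − (1/2)(f''/f')²`, for `f` with invertible `f'`. -/
noncomputable def schwarzian (f : PowerSeries ℚ) : PowerSeries ℚ :=
  sder (sder (sder f) * (sder f)⁻¹)
    - PowerSeries.C (R := ℚ) (1 / 2) * (sder (sder f) * (sder f)⁻¹) ^ 2

/-!
Write `S f = P' − P²/2` with the pre-Schwarzian `P f = f''/f'`, the logarithmic derivative of `f'`.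
The Möbius map `f ↦ f/(a + bf)` multiplies `f'` by `a/(a + bf)²`, so it shifts `P` by
`−2 (a + bf)'/(a + bf)`, and a Riccati identity for that shift shows that `S` is unchanged.
Conversely `S f = S h` says that `w = P f − P h` solves the linear equation `w' = ½(P f + P h) w`,
so `w = 0` once `w(0) = 0`; by the same argument for logarithmic derivatives `f' = h'` once
`f'(0) = h'(0)`. Finally `a` and `b` can be chosen so that `f/(a + bf)` has any prescribed
`f'(0) ≠ 0` and `P(0)`.
-/

namespace PowerSeries

theorem eq_zero_of_derivative_eq_mul {R : Type*} [CommRing R] [IsAddTorsionFree R]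
    {v w : R⟦X⟧} (hw : d⁄dX R w = v * w) (h0 : constantCoeff w = 0) : w = 0 := by
  ext n
  rw [map_zero]
  induction n using Nat.strong_induction_on with
  | _ n ih =>
    cases n with
    | zero => simpa using h0
    | succ m =>
      have hvw : coeff m (v * w) = 0 := by
        rw [coeff_mul]
        refine Finset.sum_eq_zero fun p hp => ?_
        rw [ih p.2 (Finset.Nat.antidiagonal.snd_lt hp), mul_zero]
      have hsmul : (m + 1) • coeff (m + 1) w = 0 := by
        rw [nsmul_eq_mul, mul_comm, Nat.cast_succ, ← coeff_derivative, hw, hvw]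
      simpa using (smul_eq_zero.mp hsmul).resolve_left m.succ_ne_zero

variable {K : Type*} [Field K]

noncomputable def logDeriv (φ : K⟦X⟧) : K⟦X⟧ := d⁄dX K φ * φ⁻¹

theorem derivative_eq_logDeriv_mul {φ : K⟦X⟧} (hφ : constantCoeff φ ≠ 0) :
    d⁄dX K φ = logDeriv φ * φ := by
  rw [logDeriv, mul_assoc, PowerSeries.inv_mul_cancel φ hφ, mul_one]

theorem constantCoeff_logDeriv (φ : K⟦X⟧) :
    constantCoeff (logDeriv φ) = constantCoeff (d⁄dX K φ) / constantCoeff φ := by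
  simp [logDeriv, div_eq_mul_inv]

@[simp]
theorem logDeriv_C (a : K) : logDeriv (C a) = 0 := by
  simp [logDeriv]

theorem logDeriv_mul {φ ψ : K⟦X⟧} (hφ : constantCoeff φ ≠ 0) (hψ : constantCoeff ψ ≠ 0) :
    logDeriv (φ * ψ) = logDeriv φ + logDeriv ψ := by
  have hφφ := PowerSeries.mul_inv_cancel φ hφ
  have hψψ := PowerSeries.mul_inv_cancel ψ hψ
  simp only [logDeriv, Derivation.leibniz, smul_eq_mul, PowerSeries.mul_inv_rev]
  linear_combination (d⁄dX K ψ * ψ⁻¹) * hφφ + (d⁄dX K φ * φ⁻¹) * hψψ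

theorem logDeriv_pow {φ : K⟦X⟧} (hφ : constantCoeff φ ≠ 0) (n : ℕ) :
    logDeriv (φ ^ n) = n * logDeriv φ := by
  induction n with
  | zero => simpa using logDeriv_C (1 : K)
  | succ n ih =>
    rw [pow_succ, logDeriv_mul (by simpa using pow_ne_zero n hφ) hφ, ih]
    push_cast
    ring

theorem logDeriv_inv {φ : K⟦X⟧} (hφ : constantCoeff φ ≠ 0) : logDeriv φ⁻¹ = -logDeriv φ := by
  have hφφ := PowerSeries.mul_inv_cancel φ hφ
  rw [logDeriv, logDeriv, derivative_inv', (inv_eq_iff_mul_eq_one (by simpa using hφ)).2 hφφ]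
  linear_combination (-(d⁄dX K φ * φ⁻¹)) * hφφ

theorem derivative_logDeriv (φ : K⟦X⟧) :
    d⁄dX K (logDeriv φ) = d⁄dX K (d⁄dX K φ) * φ⁻¹ - logDeriv φ ^ 2 := by
  simp only [logDeriv, Derivation.leibniz, derivative_inv', smul_eq_mul]
  ring

theorem eq_of_logDeriv_eq [CharZero K] {φ ψ : K⟦X⟧} (h : logDeriv φ = logDeriv ψ)
    (h0 : constantCoeff φ = constantCoeff ψ) (hφ : constantCoeff φ ≠ 0) : φ = ψ := by
  have hψ : constantCoeff ψ ≠ 0 := h0 ▸ hφ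
  have hode : d⁄dX K (φ - ψ) = logDeriv φ * (φ - ψ) := by
    rw [map_sub, derivative_eq_logDeriv_mul hφ, derivative_eq_logDeriv_mul hψ, h]
    ring
  exact sub_eq_zero.mp (eq_zero_of_derivative_eq_mul hode (by simp [h0]))

noncomputable def preSchwarzian (f : K⟦X⟧) : K⟦X⟧ := logDeriv (d⁄dX K f)

noncomputable def moebius (a b : K) (f : K⟦X⟧) : K⟦X⟧ := f * (C a + C b * f)⁻¹

variable {a b : K} {f : K⟦X⟧}

theorem constantCoeff_moebius_denom (hf0 : constantCoeff f = 0) :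
    constantCoeff (C a + C b * f) = a := by
  simp [hf0]

theorem constantCoeff_moebius (hf0 : constantCoeff f = 0) : constantCoeff (moebius a b f) = 0 := by
  simp [moebius, hf0]

theorem derivative_moebius_denom : d⁄dX K (C a + C b * f) = C b * d⁄dX K f := by
  simp

theorem derivative_moebius (ha : a ≠ 0) (hf0 : constantCoeff f = 0) :
    d⁄dX K (moebius a b f) = C a * d⁄dX K f * (C a + C b * f)⁻¹ ^ 2 := by
  have hu := PowerSeries.mul_inv_cancel (C a + C b * f) (by rwa [constantCoeff_moebius_denom hf0])
  rw [moebius, Derivation.leibniz, derivative_inv', derivative_moebius_denom, smul_eq_mul,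
    smul_eq_mul]
  linear_combination (-(d⁄dX K f * (C a + C b * f)⁻¹)) * hu

theorem preSchwarzian_moebius (ha : a ≠ 0) (hf0 : constantCoeff f = 0)
    (hf1 : constantCoeff (d⁄dX K f) ≠ 0) :
    preSchwarzian (moebius a b f) = preSchwarzian f - 2 * logDeriv (C a + C b * f) := by
  have hu : constantCoeff (C a + C b * f) ≠ 0 := by rwa [constantCoeff_moebius_denom hf0]
  have hu' : constantCoeff (C a + C b * f)⁻¹ ≠ 0 := by simpa using hu
  rw [preSchwarzian, derivative_moebius ha hf0, logDeriv_mul (by simpa using ⟨ha, hf1⟩)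
    (by simpa using hu'), logDeriv_mul (by simpa using ha) hf1, logDeriv_pow hu', logDeriv_inv hu,
    logDeriv_C, preSchwarzian]
  push_cast
  ring

theorem derivative_logDeriv_moebius_denom (hf1 : constantCoeff (d⁄dX K f) ≠ 0) :
    d⁄dX K (logDeriv (C a + C b * f)) =
      preSchwarzian f * logDeriv (C a + C b * f) - logDeriv (C a + C b * f) ^ 2 := by
  have hL : logDeriv (C a + C b * f) = C b * d⁄dX K f * (C a + C b * f)⁻¹ := by
    rw [logDeriv, derivative_moebius_denom]
  have hu'' : d⁄dX K (C b * d⁄dX K f) = C b * d⁄dX K (d⁄dX K f) := by simp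
  rw [derivative_logDeriv, derivative_moebius_denom, hu'', derivative_eq_logDeriv_mul hf1, hL,
    preSchwarzian]
  ring

theorem exists_moebius_with_initial_terms [CharZero K] (hf0 : constantCoeff f = 0)
    (hf1 : constantCoeff (d⁄dX K f) ≠ 0) {c : K} (hc : c ≠ 0) (p : K) :
    ∃ a b : K, a ≠ 0 ∧ constantCoeff (d⁄dX K (moebius a b f)) = c ∧
      constantCoeff (preSchwarzian (moebius a b f)) = p := by
  set a := constantCoeff (d⁄dX K f) / c
  have ha : a ≠ 0 := div_ne_zero hf1 hc
  refine ⟨a, a * (constantCoeff (preSchwarzian f) - p) / (2 * constantCoeff (d⁄dX K f)), ha,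
    ?_, ?_⟩
  · simp only [derivative_moebius ha hf0, map_mul, constantCoeff_C, map_pow, constantCoeff_inv,
      map_add, hf0, mul_zero, add_zero, inv_div, a]
    field_simp
  · rw [preSchwarzian_moebius ha hf0 hf1]
    simp only [map_sub, map_mul, map_ofNat, constantCoeff_logDeriv, map_add, derivative_C,
      Derivation.leibniz, smul_eq_mul, mul_zero, add_zero, zero_add, constantCoeff_C, hf0]
    field_simp
    ring

end PowerSeries

open PowerSeries

theorem schwarzian_eq_preSchwarzian (f : ℚ⟦X⟧) :
    schwarzian f = sder (preSchwarzian f) - C (1 / 2) * preSchwarzian f ^ 2 := rfl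

theorem schwarzian_moebius {a b : ℚ} {f : ℚ⟦X⟧} (ha : a ≠ 0) (hf0 : constantCoeff f = 0)
    (hf1 : constantCoeff (sder f) ≠ 0) : schwarzian (moebius a b f) = schwarzian f := by
  have hhalf : (2 : ℚ⟦X⟧) * C (1 / 2) = 1 := by
    rw [← map_ofNat C 2, ← map_mul]; norm_num
  have hd2 : d⁄dX ℚ (2 : ℚ⟦X⟧) = 0 := by rw [← map_ofNat C 2]; exact derivative_C
  rw [schwarzian_eq_preSchwarzian, schwarzian_eq_preSchwarzian, preSchwarzian_moebius ha hf0 hf1]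
  simp only [sder, map_sub, Derivation.leibniz, smul_eq_mul, hd2,
    derivative_logDeriv_moebius_denom hf1]
  linear_combination
    (2 * preSchwarzian f * logDeriv (C a + C b * f) - 2 * logDeriv (C a + C b * f) ^ 2) * hhalf

theorem preSchwarzian_eq_of_schwarzian_eq {f h : ℚ⟦X⟧} (hS : schwarzian f = schwarzian h)
    (h0 : constantCoeff (preSchwarzian f) = constantCoeff (preSchwarzian h)) :
    preSchwarzian f = preSchwarzian h := by
  have hode : sder (preSchwarzian f - preSchwarzian h) =
      C (1 / 2) * (preSchwarzian f + preSchwarzian h) * (preSchwarzian f - preSchwarzian h) := by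
    rw [schwarzian_eq_preSchwarzian, schwarzian_eq_preSchwarzian] at hS
    simp only [sder, map_sub] at hS ⊢
    linear_combination hS
  exact sub_eq_zero.mp (eq_zero_of_derivative_eq_mul hode (by simp [h0]))

theorem eq_of_schwarzian_eq {f h : ℚ⟦X⟧} (hS : schwarzian f = schwarzian h)
    (h0 : constantCoeff f = constantCoeff h) (h1 : constantCoeff (sder f) = constantCoeff (sder h))
    (hf1 : constantCoeff (sder f) ≠ 0)
    (h2 : constantCoeff (preSchwarzian f) = constantCoeff (preSchwarzian h)) : f = h :=
  derivative.ext (eq_of_logDeriv_eq (preSchwarzian_eq_of_schwarzian_eq hS h2) h1 hf1) h0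

/-- Two solutions `f, f̃` of the same Schwarzian equation `S_q f + g = 0`, in
the class `f(0) = 0`, `f'(0) ≠ 0`, are related by a transformation
`f̃ = f/(a + b·f)` for some `a ≠ 0`, `b ∈ ℚ` (the denominator being a unit). -/
theorem schwarzian_solution_unique_up_to_moebius (g f ftil : PowerSeries ℚ)
    (hf0 : PowerSeries.constantCoeff (R := ℚ) f = 0)
    (hf1 : PowerSeries.constantCoeff (R := ℚ) (sder f) ≠ 0)
    (hfS : schwarzian f + g = 0)
    (hg0 : PowerSeries.constantCoeff (R := ℚ) ftil = 0)
    (hg1 : PowerSeries.constantCoeff (R := ℚ) (sder ftil) ≠ 0)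
    (hgS : schwarzian ftil + g = 0) :
    ∃ a b : ℚ, a ≠ 0 ∧
      IsUnit (PowerSeries.C (R := ℚ) a + PowerSeries.C (R := ℚ) b * f) ∧
      ftil = f * (PowerSeries.C (R := ℚ) a + PowerSeries.C (R := ℚ) b * f)⁻¹ := by
  obtain ⟨a, b, ha, h1, h2⟩ :=
    exists_moebius_with_initial_terms hf0 hf1 hg1 (constantCoeff (preSchwarzian ftil))
  have hS : schwarzian (moebius a b f) = schwarzian ftil := by
    rw [schwarzian_moebius ha hf0 hf1]
    linear_combination hfS - hgS
  refine ⟨a, b, ha, ?_, ?_⟩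
  · rw [isUnit_iff_constantCoeff, constantCoeff_moebius_denom hf0]
    exact ha.isUnit
  · refine (eq_of_schwarzian_eq hS ?_ h1 (h1 ▸ hg1) h2).symm
    rw [constantCoeff_moebius hf0, hg0]
end

section
/- Let z be a class of admissible type. Consider the domain of all homogeneous f ∈ Λ^i_{≥1} of even degree i with q^{A_*}·f invertible in Λ_{≥0}, acted on by the transformations f ↦ f·(a + b·f)⁻¹ with a ∈ Λ^k_{≥0} invertible in Λ_{≥0}, b ∈ Λ^{k−i}_{≥0}, and ∂_z a = ∂_z b = 0. Then each orbit of these transformations contains a unique element of the form f ∈ q^{−A_*} + Λ^{−2}_{≥3}, where q^{−A_*} ∈ Λ^{−2}_{≥1} is the delta function at −A_*. -/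
namespace Nov

/-- The lattice `H = ℤ^{r+2}`. -/
abbrev H (r : ℕ) : Type := Fin (r + 2) → ℤ

/-- The delta function `q^{A₀}` at `A₀ ∈ H`. -/
noncomputable def delta {r : ℕ} (A₀ : H r) : H r → ℚ :=
  fun A => if A = A₀ then 1 else 0

/-- The unit element `q^0` of the Novikov ring. -/
noncomputable def one (r : ℕ) : H r → ℚ := delta (0 : H r)

/-- The convolution product `(x·y)(A) = ∑_{A₁+A₂=A} x(A₁)·y(A₂)`. -/
noncomputable def mul {r : ℕ} (x y : H r → ℚ) : H r → ℚ :=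
  fun A => ∑ᶠ B : H r, x B * y (A - B)

/-- The degree-2 derivation `(∂_z x)(A) = ∑_{A₁+A₂=A} z_{A₁}(A₂)·x(A₂)`
associated to a family `z` of additive maps `H → ℚ`. -/
noncomputable def dz {r : ℕ} (z : H r → (H r →+ ℚ)) (x : H r → ℚ) : H r → ℚ :=
  fun A => ∑ᶠ B : H r, z (A - B) B * x B

/-- The `ν`-finiteness condition: for every `C`, only finitely many support
elements `A` with `ν(A) ≤ C`. -/
def NuFinite {r : ℕ} (ν : H r →+ ℤ) (x : H r → ℚ) : Prop :=
  ∀ C : ℤ, {A : H r | x A ≠ 0 ∧ ν A ≤ C}.Finite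

/-- Membership in the homogeneous piece `Λ^i`: support in `{2μ = i}` plus
`ν`-finiteness. -/
def MemHom {r : ℕ} (μ ν : H r →+ ℤ) (i : ℤ) (x : H r → ℚ) : Prop :=
  (∀ A, x A ≠ 0 → 2 * μ A = i) ∧ NuFinite ν x

/-- Membership in `Λ = ⊕_i Λ^i`: `ν`-finiteness plus finitely many occurring
degrees. -/
def MemLambda {r : ℕ} (μ ν : H r →+ ℤ) (x : H r → ℚ) : Prop :=
  NuFinite ν x ∧ ({i : ℤ | ∃ A, x A ≠ 0 ∧ 2 * μ A = i}).Finite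

/-- Support contained in `{ν ≥ k}` (membership in `Λ_{≥k}`, for elements of
`Λ`). -/
def MemGE {r : ℕ} (ν : H r →+ ℤ) (k : ℤ) (x : H r → ℚ) : Prop :=
  ∀ A, x A ≠ 0 → k ≤ ν A

/-- A class `z` of admissible type: supported on `{μ = 1}`, `ν`-finite, equal
to `ν` at `A_*`, and vanishing on all `A₁ ≠ A_*` with `ν(A₁) < 0`. -/
structure Admissible {r : ℕ} (μ ν : H r →+ ℤ) (Astar : H r)
    (z : H r → (H r →+ ℚ)) : Prop where
  supp_mu : ∀ A₁, z A₁ ≠ 0 → μ A₁ = 1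
  nu_fin : ∀ C : ℤ, {A₁ : H r | z A₁ ≠ 0 ∧ ν A₁ ≤ C}.Finite
  at_star : ∀ A, z Astar A = (ν A : ℚ)
  vanish_neg : ∀ A₁, A₁ ≠ Astar → ν A₁ < 0 → z A₁ = 0

open scoped Classical in
/-- The (two-sided) inverse of `x` within `Λ`, chosen if it exists. -/
noncomputable def invN {r : ℕ} (μ ν : H r →+ ℤ) (x : H r → ℚ) : H r → ℚ :=
  if h : ∃ y, MemLambda μ ν y ∧ mul x y = one r ∧ mul y x = one r then
    h.choose
  else 0

/-- The Schwarzian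
`S_z f = ∂_z(∂_z∂_z f·(∂_z f)⁻¹) − (1/2)·(∂_z∂_z f·(∂_z f)⁻¹)²`. -/
noncomputable def Sz {r : ℕ} (μ ν : H r →+ ℤ) (z : H r → (H r →+ ℚ))
    (f : H r → ℚ) : H r → ℚ :=
  dz z (mul (dz z (dz z f)) (invN μ ν (dz z f)))
    - (1 / 2 : ℚ) •
        mul (mul (dz z (dz z f)) (invN μ ν (dz z f)))
          (mul (dz z (dz z f)) (invN μ ν (dz z f)))

end Nov

namespace NovProof
open Nov

variable {r : ℕ}

/-- A lower bound for the support of a `NuFinite` function. -/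
lemma NuFinite.exists_bound {ν : H r →+ ℤ} {x : H r → ℚ} (hx : NuFinite ν x) :
    ∃ m : ℤ, ∀ A, x A ≠ 0 → m ≤ ν A := by
  classical
  set s : Finset ℤ := insert 0 ((hx 0).toFinset.image ν) with hs
  have hne : s.Nonempty := ⟨0, by simp [hs]⟩
  refine ⟨s.min' hne, fun A hA => ?_⟩
  rcases le_or_gt (ν A) 0 with h | h
  · exact Finset.min'_le _ _ (by
      simp only [hs, Finset.mem_insert, Finset.mem_image]
      exact Or.inr ⟨A, by simpa [Set.Finite.mem_toFinset] using ⟨hA, h⟩, rfl⟩)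
  · exact le_of_lt (lt_of_le_of_lt (Finset.min'_le _ _ (by simp [hs])) h)

lemma exists_ne_zero_of_finsum_ne_zero {g : H r → ℚ}
    (h : (∑ᶠ B, g B) ≠ 0) : ∃ B, g B ≠ 0 := by
  by_contra hc
  push_neg at hc
  exact h (by simp [funext hc, finsum_zero])

lemma mul_ne_zero_elim {x y : H r → ℚ} {A : H r}
    (h : mul x y A ≠ 0) : ∃ B, x B ≠ 0 ∧ y (A - B) ≠ 0 := by
  obtain ⟨B, hB⟩ := exists_ne_zero_of_finsum_ne_zero h
  exact ⟨B, fun h0 => hB (by simp [h0]), fun h0 => hB (by simp [h0])⟩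

/-- Convolution evaluated as a finite sum over any large enough finset. -/
lemma mul_eq_sum {x y : H r → ℚ} {A : H r} {s : Finset (H r)}
    (h : ∀ B, x B ≠ 0 → y (A - B) ≠ 0 → B ∈ s) :
    mul x y A = ∑ B ∈ s, x B * y (A - B) := by
  refine finsum_eq_finset_sum_of_support_subset _ fun B hB => ?_
  have hB' : x B * y (A - B) ≠ 0 := hB
  exact h B (fun h0 => hB' (by simp [h0])) (fun h0 => hB' (by simp [h0]))

lemma mul_comm' (x y : H r → ℚ) : mul x y = mul y x := by
  funext A
  refine finsum_eq_of_bijective (fun B => A - B) ⟨fun a b hab => by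
    simpa using congrArg (fun t => A - t) hab, fun b => ⟨A - b, by simp⟩⟩ fun B => ?_
  simp only [sub_sub_cancel]
  ring

lemma delta_mul (D : H r) (x : H r → ℚ) : mul (delta D) x = fun A => x (A - D) := by
  funext A
  have : ∀ B, B ≠ D → delta D B * x (A - B) = 0 := by
    intro B hB; simp [delta, hB]
  have := finsum_eq_single (fun B => delta D B * x (A - B)) D this
  simp only [mul] at *
  rw [this]; simp [delta]

lemma mul_delta (x : H r → ℚ) (D : H r) : mul x (delta D) = fun A => x (A - D) := by
  rw [mul_comm', delta_mul]

lemma one_mul' (x : H r → ℚ) : mul (one r) x = x := by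
  rw [one, delta_mul]; funext A; simp

lemma mul_one' (x : H r → ℚ) : mul x (one r) = x := by
  rw [mul_comm', one_mul']

lemma one_apply {A : H r} (h : A ≠ 0) : one r A = 0 := by simp [one, delta, h]

lemma one_apply_zero : one r (0 : H r) = 1 := by simp [one, delta]

end NovProof
namespace NovProof
open Nov

variable {r : ℕ} {μ ν : H r →+ ℤ}

lemma nf_bound {x : H r → ℚ} (hx : NuFinite ν x) :
    ∃ m : ℤ, ∀ A, x A ≠ 0 → m ≤ ν A := NuFinite.exists_bound hx

lemma nf_subset {x y : H r → ℚ} (hx : NuFinite ν x)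
    (h : ∀ A, y A ≠ 0 → x A ≠ 0) : NuFinite ν y := fun C =>
  (hx C).subset fun A hA => ⟨h A hA.1, hA.2⟩

lemma nf_add {x y : H r → ℚ} (hx : NuFinite ν x) (hy : NuFinite ν y) :
    NuFinite ν (x + y) := by
  intro C
  refine ((hx C).union (hy C)).subset fun A hA => ?_
  rcases hA with ⟨hne, hle⟩
  by_cases h : x A = 0
  · exact Or.inr ⟨fun h0 => hne (by simp [Pi.add_apply, h, h0]), hle⟩
  · exact Or.inl ⟨h, hle⟩

lemma nf_neg {x : H r → ℚ} (hx : NuFinite ν x) : NuFinite ν (-x) :=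
  nf_subset hx (by intro A hA; simpa using hA)

lemma nf_sub {x y : H r → ℚ} (hx : NuFinite ν x) (hy : NuFinite ν y) :
    NuFinite ν (x - y) := by
  simpa [sub_eq_add_neg] using nf_add hx (nf_neg hy)

lemma nf_delta (D : H r) : NuFinite ν (delta D) := fun C =>
  (Set.finite_singleton D).subset fun A hA => by
    by_contra h
    exact hA.1 (by simp [Nov.delta, show A ≠ D from h])

lemma nf_one : NuFinite ν (one r) := nf_delta 0

lemma nu_add_sub (A B : H r) : ν B + ν (A - B) = ν A := by
  rw [← map_add]; congr 1; abel

lemma nf_mul {x y : H r → ℚ} (hx : NuFinite ν x) (hy : NuFinite ν y) :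
    NuFinite ν (Nov.mul x y) := by
  obtain ⟨mx, hmx⟩ := nf_bound hx
  obtain ⟨my, hmy⟩ := nf_bound hy
  intro C
  refine (((hx (C - my)).prod (hy (C - mx))).image
    (fun p : H r × H r => p.1 + p.2)).subset fun A hA => ?_
  obtain ⟨B, hB1, hB2⟩ := mul_ne_zero_elim hA.1
  have h1 := hmx B hB1
  have h2 := hmy _ hB2
  have hsum := nu_add_sub (ν := ν) A B
  have hC : ν A ≤ C := hA.2
  exact ⟨⟨B, A - B⟩, ⟨⟨hB1, by show ν B ≤ _; omega⟩, ⟨hB2, by show ν (A - B) ≤ _; omega⟩⟩, by simp⟩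

end NovProof
namespace NovProof
open Nov

variable {r : ℕ} {μ ν : H r →+ ℤ}

/-- Truncated support finset. -/
noncomputable def cut {x : H r → ℚ} (hx : NuFinite ν x) (C : ℤ) : Finset (H r) :=
  (hx C).toFinset

lemma mem_cut {x : H r → ℚ} (hx : NuFinite ν x) {C : ℤ} {A : H r} :
    A ∈ cut hx C ↔ x A ≠ 0 ∧ ν A ≤ C := Set.Finite.mem_toFinset _

lemma add_mul' {x y w : H r → ℚ} (hx : NuFinite ν x) (hy : NuFinite ν y)
    {m : ℤ} (hw : ∀ B, w B ≠ 0 → m ≤ ν B) :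
    Nov.mul (x + y) w = Nov.mul x w + Nov.mul y w := by
  funext A
  have hsub : ∀ B : H r, (x + y) B ≠ 0 → w (A - B) ≠ 0 → B ∈ cut hx (ν A - m) ∪ cut hy (ν A - m) := by
    intro B h1 h2
    have hb := hw _ h2
    have hs := nu_add_sub (ν := ν) A B
    by_cases h : x B = 0
    · exact Finset.mem_union_right _ ((mem_cut hy).2 ⟨fun h0 => h1 (by simp [Pi.add_apply, h, h0]), by omega⟩)
    · exact Finset.mem_union_left _ ((mem_cut hx).2 ⟨h, by omega⟩)
  have hsubx : ∀ B : H r, x B ≠ 0 → w (A - B) ≠ 0 → B ∈ cut hx (ν A - m) ∪ cut hy (ν A - m) := by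
    intro B h1 h2
    have hb := hw _ h2
    have hs := nu_add_sub (ν := ν) A B
    exact Finset.mem_union_left _ ((mem_cut hx).2 ⟨h1, by omega⟩)
  have hsuby : ∀ B : H r, y B ≠ 0 → w (A - B) ≠ 0 → B ∈ cut hx (ν A - m) ∪ cut hy (ν A - m) := by
    intro B h1 h2
    have hb := hw _ h2
    have hs := nu_add_sub (ν := ν) A B
    exact Finset.mem_union_right _ ((mem_cut hy).2 ⟨h1, by omega⟩)
  rw [Pi.add_apply, mul_eq_sum hsub, mul_eq_sum hsubx, mul_eq_sum hsuby, ← Finset.sum_add_distrib]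
  exact Finset.sum_congr rfl fun B _ => by simp [add_mul]

lemma neg_mul' (x w : H r → ℚ) : Nov.mul (-x) w = -Nov.mul x w := by
  funext A
  have : ∀ B : H r, (-x) B * w (A - B) = -(x B * w (A - B)) := fun B => by simp
  calc Nov.mul (-x) w A = ∑ᶠ B, -(x B * w (A - B)) := by
        simp only [Nov.mul]; exact finsum_congr this
    _ = -Nov.mul x w A := by
        simp only [Nov.mul]
        exact (finsum_neg_distrib _)
  
lemma sub_mul' {x y w : H r → ℚ} (hx : NuFinite ν x) (hy : NuFinite ν y)
    {m : ℤ} (hw : ∀ B, w B ≠ 0 → m ≤ ν B) :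
    Nov.mul (x - y) w = Nov.mul x w - Nov.mul y w := by
  have := add_mul' hx (nf_neg hy) hw
  simpa [sub_eq_add_neg, neg_mul'] using this

lemma memGE_mul {k l : ℤ} {x y : H r → ℚ} (hx : MemGE ν k x) (hy : MemGE ν l y) :
    MemGE ν (k + l) (Nov.mul x y) := by
  intro A hA
  obtain ⟨B, h1, h2⟩ := mul_ne_zero_elim hA
  have := hx B h1
  have := hy _ h2
  have := nu_add_sub (ν := ν) A B
  omega

lemma memGE_mono {k l : ℤ} {x : H r → ℚ} (h : l ≤ k) (hx : MemGE ν k x) :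
    MemGE ν l x := fun A hA => le_trans h (hx A hA)

lemma memGE_delta {D : H r} : MemGE ν (ν D) (delta D) := by
  intro A hA
  have : A = D := by by_contra h; exact hA (by simp [Nov.delta, h])
  simp [this]

lemma memGE_sub_min {k l : ℤ} {x y : H r → ℚ} (hx : MemGE ν k x) (hy : MemGE ν l y) :
    MemGE ν (min k l) (x - y) := by
  intro A hA
  by_cases h : x A = 0
  · have : y A ≠ 0 := fun h0 => hA (by simp [Pi.sub_apply, h, h0])
    exact le_trans (min_le_right _ _) (hy A this)
  · exact le_trans (min_le_left _ _) (hx A h)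

lemma memGE_add_min {k l : ℤ} {x y : H r → ℚ} (hx : MemGE ν k x) (hy : MemGE ν l y) :
    MemGE ν (min k l) (x + y) := by
  intro A hA
  by_cases h : x A = 0
  · have : y A ≠ 0 := fun h0 => hA (by simp [Pi.add_apply, h, h0])
    exact le_trans (min_le_right _ _) (hy A this)
  · exact le_trans (min_le_left _ _) (hx A h)

/-- Homogeneous-support multiplicativity. -/
lemma hom_mul {i j : ℤ} {x y : H r → ℚ} (hx : ∀ A, x A ≠ 0 → 2 * μ A = i)
    (hy : ∀ A, y A ≠ 0 → 2 * μ A = j) :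
    ∀ A, Nov.mul x y A ≠ 0 → 2 * μ A = i + j := by
  intro A hA
  obtain ⟨B, h1, h2⟩ := mul_ne_zero_elim hA
  have := hx B h1
  have := hy _ h2
  have : (2:ℤ) * μ B + 2 * μ (A - B) = 2 * μ A := by
    rw [← mul_add, ← map_add]
    congr 2
    abel
  omega

lemma memHom_mul {i j : ℤ} {x y : H r → ℚ} (hx : MemHom μ ν i x) (hy : MemHom μ ν j y) :
    MemHom μ ν (i + j) (Nov.mul x y) :=
  ⟨hom_mul hx.1 hy.1, nf_mul hx.2 hy.2⟩

lemma memHom_delta (D : H r) : MemHom μ ν (2 * μ D) (delta D) := by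
  refine ⟨fun A hA => ?_, nf_delta D⟩
  have : A = D := by by_contra h; exact hA (by simp [Nov.delta, h])
  simp [this]

lemma memHom_sub {i : ℤ} {x y : H r → ℚ} (hx : MemHom μ ν i x) (hy : MemHom μ ν i y) :
    MemHom μ ν i (x - y) := by
  refine ⟨fun A hA => ?_, nf_sub hx.2 hy.2⟩
  by_cases h : x A = 0
  · exact hy.1 A (fun h0 => hA (by simp [Pi.sub_apply, h, h0]))
  · exact hx.1 A h

lemma memHom_add {i : ℤ} {x y : H r → ℚ} (hx : MemHom μ ν i x) (hy : MemHom μ ν i y) :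
    MemHom μ ν i (x + y) := by
  refine ⟨fun A hA => ?_, nf_add hx.2 hy.2⟩
  by_cases h : x A = 0
  · exact hy.1 A (fun h0 => hA (by simp [Pi.add_apply, h, h0]))
  · exact hx.1 A h

lemma memLambda_of_memHom {i : ℤ} {x : H r → ℚ} (hx : MemHom μ ν i x) :
    MemLambda μ ν x := by
  refine ⟨hx.2, (Set.finite_singleton i).subset fun j hj => ?_⟩
  obtain ⟨A, hA, hA2⟩ := hj
  simp [← hA2, hx.1 A hA]

end NovProof
namespace NovProof
open Nov

variable {r : ℕ} {ν : H r →+ ℤ}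

lemma mul_assoc' {x y z : H r → ℚ} (hx : NuFinite ν x) (hy : NuFinite ν y)
    (hz : NuFinite ν z) :
    Nov.mul (Nov.mul x y) z = Nov.mul x (Nov.mul y z) := by
  classical
  obtain ⟨mx, hmx⟩ := nf_bound hx
  obtain ⟨my, hmy⟩ := nf_bound hy
  obtain ⟨mz, hmz⟩ := nf_bound hz
  funext A
  set U : Finset (H r) := cut hx (ν A - my - mz) with hU
  set V : Finset (H r) := cut hy (ν A - mx - mz) with hV
  set UV : Finset (H r) :=
    ((U ×ˢ V).image (fun p : H r × H r => p.1 + p.2)).filter (fun D => ν D ≤ ν A - mz) with hUV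
  -- Step 1
  have step1 : Nov.mul (Nov.mul x y) z A = ∑ D ∈ UV, Nov.mul x y D * z (A - D) := by
    refine mul_eq_sum fun D h1 h2 => ?_
    obtain ⟨B, hB1, hB2⟩ := mul_ne_zero_elim h1
    have hzb := hmz _ h2
    have hsAD := nu_add_sub (ν := ν) A D
    have hsDB := nu_add_sub (ν := ν) D B
    have hxB := hmx B hB1
    have hyC := hmy _ hB2
    have m1 : B ∈ U := (mem_cut hx).2 ⟨hB1, by omega⟩
    have m2 : D - B ∈ V := (mem_cut hy).2 ⟨hB2, by omega⟩
    refine Finset.mem_filter.2 ⟨Finset.mem_image.2 ⟨⟨B, D - B⟩, ?_, by simp⟩, by omega⟩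
    exact Finset.mem_product.2 ⟨m1, m2⟩
  -- Step 2
  have step2 : ∀ D ∈ UV, Nov.mul x y D = ∑ B ∈ U, x B * y (D - B) := by
    intro D hD
    have hDle : ν D ≤ ν A - mz := (Finset.mem_filter.1 hD).2
    refine mul_eq_sum fun B h1 h2 => ?_
    have := hmy _ h2
    have := nu_add_sub (ν := ν) D B
    exact (mem_cut hx).2 ⟨h1, by omega⟩
  -- inner sum identification
  have step3 : ∀ B ∈ U, ∑ D ∈ UV, y (D - B) * z (A - D) = Nov.mul y z (A - B) := by
    intro B hB
    have hxB : x B ≠ 0 ∧ ν B ≤ ν A - my - mz := (mem_cut hx).1 hB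
    have h1 : Nov.mul y z (A - B) = ∑ᶠ D : H r, y (D - B) * z (A - D) := by
      refine finsum_eq_of_bijective (fun C => B + C)
        ⟨fun a b hab => by simpa using hab, fun D => ⟨D - B, add_sub_cancel B D⟩⟩ fun C => ?_
      have e1 : B + C - B = C := by abel
      have e2 : A - (B + C) = A - B - C := by abel
      rw [e1, e2]
    rw [h1]
    refine Eq.symm (finsum_eq_finset_sum_of_support_subset _ fun D hD => ?_)
    have h2 : y (D - B) * z (A - D) ≠ 0 := hD
    have hy2 : y (D - B) ≠ 0 := fun h0 => h2 (by simp [h0])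
    have hz2 : z (A - D) ≠ 0 := fun h0 => h2 (by simp [h0])
    have := hmy _ hy2
    have := hmz _ hz2
    have := hmx B hxB.1
    have hsAD := nu_add_sub (ν := ν) A D
    have hsDB := nu_add_sub (ν := ν) D B
    simp only [hUV, Finset.coe_filter, Set.mem_setOf_eq]
    have m2 : D - B ∈ V := (mem_cut hy).2 ⟨hy2, by omega⟩
    refine ⟨Finset.mem_image.2 ⟨⟨B, D - B⟩, ?_, by simp⟩, by omega⟩
    exact Finset.mem_product.2 ⟨hB, m2⟩
  -- RHS
  have step4 : Nov.mul x (Nov.mul y z) A = ∑ B ∈ U, x B * Nov.mul y z (A - B) := by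
    refine mul_eq_sum fun B h1 h2 => ?_
    obtain ⟨C, hC1, hC2⟩ := mul_ne_zero_elim h2
    have := hmy C hC1
    have := hmz _ hC2
    have hs1 := nu_add_sub (ν := ν) A B
    have hs2 := nu_add_sub (ν := ν) (A - B) C
    exact (mem_cut hx).2 ⟨h1, by omega⟩
  rw [step1, step4]
  calc ∑ D ∈ UV, Nov.mul x y D * z (A - D)
      = ∑ D ∈ UV, ∑ B ∈ U, x B * y (D - B) * z (A - D) := by
        refine Finset.sum_congr rfl fun D hD => ?_
        rw [step2 D hD, Finset.sum_mul]
    _ = ∑ B ∈ U, ∑ D ∈ UV, x B * (y (D - B) * z (A - D)) := by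
        rw [Finset.sum_comm]
        exact Finset.sum_congr rfl fun B _ => Finset.sum_congr rfl fun D _ => by ring
    _ = ∑ B ∈ U, x B * Nov.mul y z (A - B) := by
        refine Finset.sum_congr rfl fun B hB => ?_
        rw [← Finset.mul_sum, step3 B hB]

lemma inv_unique {x y y' : H r → ℚ} (hx : NuFinite ν x) (hy : NuFinite ν y)
    (hy' : NuFinite ν y') (h1 : Nov.mul x y = one r) (h2 : Nov.mul y' x = one r) :
    y = y' := by
  have : Nov.mul y' (Nov.mul x y) = y' := by rw [h1, mul_one']
  rw [← mul_assoc' hy' hx hy, h2, one_mul'] at this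
  exact this

end NovProof
namespace NovProof
open Nov

variable {r : ℕ}

noncomputable def npow (v : H r → ℚ) : ℕ → (H r → ℚ)
  | 0 => one r
  | n + 1 => Nov.mul v (npow v n)

noncomputable def geom (ν : H r →+ ℤ) (v : H r → ℚ) : H r → ℚ :=
  fun A => ∑ n ∈ Finset.range ((ν A).toNat + 1), npow v n A

variable {ν : H r →+ ℤ} {μ : H r →+ ℤ}

lemma npow_nf {v : H r → ℚ} (hv : NuFinite ν v) (n : ℕ) : NuFinite ν (npow v n) := by
  induction n with
  | zero => exact nf_one
  | succ n ih => exact nf_mul hv ih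

lemma npow_GE {v : H r → ℚ} (hv : MemGE ν 1 v) (n : ℕ) : MemGE ν n (npow v n) := by
  induction n with
  | zero =>
      intro A hA
      have : A = 0 := by
        by_contra h; exact hA (one_apply h)
      simp [this]
  | succ n ih =>
      have := memGE_mul hv ih
      intro A hA
      have := this A hA
      omega

lemma npow_hom {v : H r → ℚ} (hv : ∀ A, v A ≠ 0 → 2 * μ A = 0) (n : ℕ) :
    ∀ A, npow v n A ≠ 0 → 2 * μ A = 0 := by
  induction n with
  | zero =>
      intro A hA
      have : A = 0 := by by_contra h; exact hA (one_apply h)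
      simp [this]
  | succ n ih => simpa [npow] using hom_mul hv ih

lemma npow_eq_zero {v : H r → ℚ} (hv : MemGE ν 1 v) {n : ℕ} {A : H r}
    (h : ν A < n) : npow v n A = 0 := by
  by_contra h0
  have := npow_GE hv n A h0
  omega

lemma geom_eq_sum {v : H r → ℚ} (hv : MemGE ν 1 v) {A : H r} {N : ℕ}
    (h : (ν A).toNat < N) : geom ν v A = ∑ n ∈ Finset.range N, npow v n A := by
  refine Finset.sum_subset (Finset.range_subset_range.2 (by omega)) fun n _ hn => ?_
  have : (ν A).toNat + 1 ≤ n := by simpa [Finset.mem_range] using hn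
  refine npow_eq_zero hv ?_
  have := Int.self_le_toNat (ν A)
  omega

lemma geom_elim {v : H r → ℚ} {A : H r} (h : geom ν v A ≠ 0) :
    ∃ n, npow v n A ≠ 0 ∧ n ≤ (ν A).toNat := by
  by_contra hc
  push_neg at hc
  refine h (Finset.sum_eq_zero fun n hn => ?_)
  rcases eq_or_ne (npow v n A) 0 with h0 | h0
  · exact h0
  · exact absurd (hc n h0) (by simpa [Finset.mem_range, Nat.lt_succ_iff] using hn; )

lemma geom_GE0 {v : H r → ℚ} (hv : MemGE ν 1 v) : MemGE ν 0 (geom ν v) := by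
  intro A hA
  obtain ⟨n, hn, _⟩ := geom_elim hA
  have := npow_GE hv n A hn
  omega

lemma geom_nf {v : H r → ℚ} (hv : NuFinite ν v) : NuFinite ν (geom ν v) := by
  intro C
  have : {A : H r | geom ν v A ≠ 0 ∧ ν A ≤ C} ⊆
      ⋃ n ∈ Finset.range (C.toNat + 1), {A : H r | npow v n A ≠ 0 ∧ ν A ≤ C} := by
    intro A hA
    obtain ⟨n, hn, hle⟩ := geom_elim hA.1
    have h1 : ν A ≤ C := hA.2
    have h2 : n ≤ C.toNat := le_trans hle (Int.toNat_le_toNat h1)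
    simp only [Set.mem_iUnion, Finset.mem_range]
    exact ⟨n, by omega, hn, h1⟩
  exact (Set.Finite.biUnion (Finset.range (C.toNat + 1)).finite_toSet
    fun n _ => npow_nf hv n C).subset this

lemma geom_hom {v : H r → ℚ} (hv : ∀ A, v A ≠ 0 → 2 * μ A = 0) :
    ∀ A, geom ν v A ≠ 0 → 2 * μ A = 0 := by
  intro A hA
  obtain ⟨n, hn, _⟩ := geom_elim hA
  exact npow_hom hv n A hn

lemma geom_sub_one_GE {v : H r → ℚ} {k : ℤ} (hk : 1 ≤ k) (hv : MemGE ν k v) :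
    MemGE ν k (geom ν v - one r) := by
  have hv1 : MemGE ν 1 v := memGE_mono hk hv
  intro A hA
  by_cases h0 : A = 0
  · -- at zero: geom 0 = one 0 since npow n 0 = 0 for n ≥ 1
    exfalso
    apply hA
    subst h0
    have : geom ν v 0 = one r 0 := by
      unfold geom
      rw [map_zero]
      have : ∀ n ∈ Finset.range ((0:ℤ).toNat + 1), npow v n 0 = if n = 0 then one r 0 else 0 := by
        intro n hn
        rcases n with _ | n
        · simp only [if_pos]; rfl
        · simp only [Nat.succ_ne_zero, if_false]
          exact npow_eq_zero hv1 (by simp)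
      rw [Finset.sum_congr rfl this]
      simp
    simp [Pi.sub_apply, this]
  · -- A ≠ 0 : one A = 0, so geom A ≠ 0 and some npow n A ≠ 0 with n ≥ 1
    have hone : one r A = 0 := one_apply h0
    have hg : geom ν v A ≠ 0 := by
      intro h
      exact hA (by simp [Pi.sub_apply, h, hone])
    obtain ⟨n, hn, _⟩ := geom_elim hg
    rcases n with _ | n
    · exact absurd (by simpa [npow] using hn) (by simpa [one, delta, h0] using h0 ∘ fun h => h)
    · -- npow (n+1) ∈ GE ((n+1) : with k each factor ≥ k? we only know ≥ n+1 ≥ 1; need ≥ k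
      -- npow v (n+1) = v * npow v n, v ∈ GE k, npow v n ∈ GE n ≥ 0
      have h1 : MemGE ν (k + n) (npow v (n+1)) := by
        have := memGE_mul hv (npow_GE hv1 n)
        exact fun B hB => by have := this B hB; omega
      have := h1 A hn
      omega

lemma one_sub_mul_geom {v : H r → ℚ} (hv : NuFinite ν v) (hv1 : MemGE ν 1 v) :
    Nov.mul (one r - v) (geom ν v) = one r := by
  have hgnf : NuFinite ν (geom ν v) := geom_nf hv
  have hgGE : MemGE ν 0 (geom ν v) := geom_GE0 hv1
  have hdist : Nov.mul (one r - v) (geom ν v) = geom ν v - Nov.mul v (geom ν v) := by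
    rw [sub_mul' nf_one hv hgGE, one_mul']
  rw [hdist]
  funext A
  -- compute v * geom at A
  have key : Nov.mul v (geom ν v) A = geom ν v A - one r A := by
    set N : ℕ := (ν A).toNat + 1 with hN
    set s : Finset (H r) := cut hv (ν A) with hs
    have h1 : Nov.mul v (geom ν v) A = ∑ B ∈ s, v B * geom ν v (A - B) := by
      refine mul_eq_sum fun B hB1 hB2 => ?_
      have := hgGE _ hB2
      have := nu_add_sub (ν := ν) A B
      exact (mem_cut hv).2 ⟨hB1, by omega⟩
    have h2 : ∀ B ∈ s, geom ν v (A - B) = ∑ n ∈ Finset.range N, npow v n (A - B) := by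
      intro B hB
      obtain ⟨hB1, hB2⟩ := (mem_cut hv).1 hB
      have hb1 : 1 ≤ ν B := hv1 B hB1
      have := nu_add_sub (ν := ν) A B
      refine geom_eq_sum hv1 ?_
      have hle : ν (A - B) ≤ ν A := by omega
      have := Int.toNat_le_toNat hle
      omega
    have h3 : ∀ n, ∑ B ∈ s, v B * npow v n (A - B) = npow v (n + 1) A := by
      intro n
      refine Eq.symm (mul_eq_sum fun B hB1 hB2 => ?_)
      have hn : (n : ℤ) ≤ ν (A - B) := npow_GE (memGE_mono le_rfl hv1) n _ hB2
      have := nu_add_sub (ν := ν) A B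
      exact (mem_cut hv).2 ⟨hB1, by omega⟩
    calc Nov.mul v (geom ν v) A = ∑ B ∈ s, v B * ∑ n ∈ Finset.range N, npow v n (A - B) := by
          rw [h1]; exact Finset.sum_congr rfl fun B hB => by rw [h2 B hB]
      _ = ∑ n ∈ Finset.range N, ∑ B ∈ s, v B * npow v n (A - B) := by
          rw [← Finset.sum_comm]
          exact Finset.sum_congr rfl fun B _ => Finset.mul_sum _ _ _
      _ = ∑ n ∈ Finset.range N, npow v (n + 1) A := Finset.sum_congr rfl fun n _ => h3 n
      _ = ∑ n ∈ Finset.range (N + 1), npow v n A - npow v 0 A := by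
          rw [Finset.sum_range_succ' (fun n => npow v n A) N]; ring
      _ = geom ν v A - one r A := by
          rw [← geom_eq_sum hv1 (by omega)]
          rfl
  simp only [Pi.sub_apply, key]
  ring

end NovProof
namespace NovProof
open Nov

variable {r : ℕ} {μ ν : H r →+ ℤ} {Astar : H r} {z : H r → (H r →+ ℚ)}

/-- The level-0 part of `x`. -/
noncomputable def lvl0 (ν : H r →+ ℤ) (x : H r → ℚ) : H r → ℚ :=
  fun A => if ν A = 0 then x A else 0

lemma lvl0_nf {x : H r → ℚ} (hx : NuFinite ν x) : NuFinite ν (lvl0 ν x) :=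
  nf_subset hx fun A hA => by
    by_contra h; exact hA (by simp [lvl0, h])

lemma lvl0_apply_ne {x : H r → ℚ} {A : H r} (h : lvl0 ν x A ≠ 0) :
    ν A = 0 ∧ x A ≠ 0 := by
  by_cases h0 : ν A = 0
  · exact ⟨h0, by simpa [lvl0, h0] using h⟩
  · exact absurd (by simp [lvl0, h0]) h

lemma lvl0_GE0 {x : H r → ℚ} : MemGE ν 0 (lvl0 ν x) := fun A hA =>
  le_of_eq (lvl0_apply_ne hA).1.symm

lemma sub_lvl0_GE1 {x : H r → ℚ} (hx : MemGE ν 0 x) :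
    MemGE ν 1 (x - lvl0 ν x) := by
  intro A hA
  by_cases h0 : ν A = 0
  · exact absurd (by simp [Pi.sub_apply, lvl0, h0]) hA
  · have : x A ≠ 0 := fun h => hA (by simp [Pi.sub_apply, lvl0, h])
    have := hx A this
    omega

lemma lvl0_one : lvl0 ν (one r) = one r := by
  funext A
  by_cases h : ν A = 0
  · simp [lvl0, h]
  · have : A ≠ 0 := fun h0 => h (by simp [h0])
    simp [lvl0, h, one_apply this]

lemma mul_lvl0 {x y : H r → ℚ} (hx : MemGE ν 0 x) (hy : MemGE ν 0 y) :
    Nov.mul (lvl0 ν x) (lvl0 ν y) = lvl0 ν (Nov.mul x y) := by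
  funext A
  by_cases hA : ν A = 0
  · have : ∀ B : H r, lvl0 ν x B * lvl0 ν y (A - B) = x B * y (A - B) := by
      intro B
      have hs := nu_add_sub (ν := ν) A B
      by_cases hB : ν B = 0
      · by_cases hB2 : ν (A - B) = 0
        · simp [lvl0, hB, hB2]
        · have : y (A - B) = 0 := by
            by_contra h
            have := hy _ h
            omega
          simp [lvl0, hB, hB2, this]
      · have hrhs : x B * y (A - B) = 0 := by
          rcases eq_or_ne (x B) 0 with h0 | h0
          · simp [h0]
          · have h1 := hx _ h0
            have h2 : y (A - B) = 0 := by
              by_contra h3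
              have := hy _ h3
              omega
            simp [h2]
        simp [lvl0, hB, hrhs]
    simp only [Nov.mul, lvl0, hA, if_pos]
    exact finsum_congr this
  · have h0 : ∀ B : H r, lvl0 ν x B * lvl0 ν y (A - B) = 0 := by
      intro B
      have hs := nu_add_sub (ν := ν) A B
      by_cases hB : ν B = 0
      · have h2 : ν (A - B) ≠ 0 := by omega
        have h3 : lvl0 ν y (A - B) = 0 := if_neg h2
        rw [h3, mul_zero]
      · have h3 : lvl0 ν x B = 0 := if_neg hB
        rw [h3, zero_mul]
    have hz0 : Nov.mul (lvl0 ν x) (lvl0 ν y) A = 0 := by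
      simp only [Nov.mul]
      rw [finsum_congr h0, finsum_zero]
    rw [hz0]
    simp [lvl0, hA]

lemma z_apply_ne_zero {A₁ : H r} (hz : Admissible μ ν Astar z)
    (h : z A₁ ≠ 0) : A₁ = Astar ∨ 0 ≤ ν A₁ := by
  by_contra hc
  push_neg at hc
  exact h (hz.vanish_neg A₁ hc.1 (by omega))

/-- A `∂_z`-constant supported in `ν ≥ 1` vanishes. -/
lemma dz_const_GE1_eq_zero {x : H r → ℚ} (hz : Admissible μ ν Astar z)
    (hνA : ν Astar = -1) (hx : NuFinite ν x) (h1 : MemGE ν 1 x) (hdz : dz z x = 0) : x = 0 := by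
  classical
  by_contra hc
  have : ∃ A, x A ≠ 0 := by
    by_contra h
    push_neg at h
    exact hc (funext h)
  obtain ⟨A₀, hA₀⟩ := this
  -- pick support element with minimal ν
  have hne : A₀ ∈ (hx (ν A₀)).toFinset := by
    rw [Set.Finite.mem_toFinset]; exact ⟨hA₀, le_refl _⟩
  obtain ⟨B₀, hB₀mem, hB₀min⟩ :=
    Finset.exists_min_image (hx (ν A₀)).toFinset ν ⟨A₀, hne⟩
  rw [Set.Finite.mem_toFinset] at hB₀mem
  have hmin : ∀ B, x B ≠ 0 → ν B₀ ≤ ν B := by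
    intro B hB
    rcases le_or_gt (ν B) (ν A₀) with h | h
    · exact hB₀min B (by rw [Set.Finite.mem_toFinset]; exact ⟨hB, h⟩)
    · exact le_trans hB₀mem.2 (le_of_lt h)
  have hm1 : 1 ≤ ν B₀ := h1 B₀ hB₀mem.1
  have key : dz z x (Astar + B₀) = (ν B₀ : ℚ) * x B₀ := by
    have hsingle : ∀ B, B ≠ B₀ → z (Astar + B₀ - B) B * x B = 0 := by
      intro B hB
      rcases eq_or_ne (x B) 0 with h0 | h0
      · simp [h0]
      · have hne' : Astar + B₀ - B ≠ Astar := by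
          intro h
          apply hB
          have h2 : B₀ - B = 0 := by
            calc B₀ - B = (Astar + B₀ - B) - Astar := by abel
              _ = 0 := by rw [h]; simp
          exact (sub_eq_zero.1 h2).symm
        have hb := hmin B h0
        have hlt : ν (Astar + B₀ - B) < 0 := by
          have he : ν (Astar + B₀ - B) = ν Astar + ν B₀ - ν B := by
            simp [map_add, map_sub]
          omega
        rw [hz.vanish_neg _ hne' hlt]
        simp
    have := finsum_eq_single (fun B => z (Astar + B₀ - B) B * x B) B₀ hsingle
    rw [dz, this]
    have h4 : Astar + B₀ - B₀ = Astar := by abel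
    show z (Astar + B₀ - B₀) B₀ * x B₀ = _
    rw [h4, hz.at_star]
  rw [hdz, Pi.zero_apply] at key
  have hq : (ν B₀ : ℚ) ≠ 0 := by
    exact_mod_cast (by omega : ν B₀ ≠ 0)
  exact (mul_ne_zero hq hB₀mem.1) key.symm

end NovProof
namespace NovProof
open Nov

variable {r : ℕ} {μ ν : H r →+ ℤ} {Astar : H r} {z : H r → (H r →+ ℚ)}

lemma dz_support_subset (hz : Admissible μ ν Astar z) (hνA : ν Astar = -1)
    {x : H r → ℚ} (hx : NuFinite ν x) (A : H r) :
    (Function.support fun B => z (A - B) B * x B).Finite := by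
  refine (hx (ν A + 1)).subset fun B hB => ?_
  have hB' : z (A - B) B * x B ≠ 0 := hB
  have hxB : x B ≠ 0 := fun h => hB' (by simp [h])
  have hzB : z (A - B) ≠ 0 := by
    intro h
    exact hB' (by simp [h])
  rcases z_apply_ne_zero hz hzB with h | h
  · have : ν (A - B) = -1 := by rw [h, hνA]
    have := nu_add_sub (ν := ν) A B
    exact ⟨hxB, by omega⟩
  · have := nu_add_sub (ν := ν) A B
    exact ⟨hxB, by omega⟩

lemma dz_sub (hz : Admissible μ ν Astar z) (hνA : ν Astar = -1)
    {x y : H r → ℚ} (hx : NuFinite ν x) (hy : NuFinite ν y) :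
    dz z (x - y) = dz z x - dz z y := by
  funext A
  have h1 : ∀ B : H r, z (A - B) B * (x B - y B) = z (A - B) B * x B - z (A - B) B * y B := by
    intro B; exact mul_sub _ _ _
  simp only [dz, Pi.sub_apply]
  rw [finsum_congr h1]
  exact finsum_sub_distrib (dz_support_subset hz hνA hx A) (dz_support_subset hz hνA hy A)

section Constz

variable (hz : Admissible μ ν Astar z)

/-- Relevant `z`-support at level `n`. -/
noncomputable def SSf (hz : Admissible μ ν Astar z) (n : ℕ) : Finset (H r) := by
  classical
  exact (hz.nu_fin ((n : ℤ) - 1)).toFinset.filter (· ≠ Astar)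

lemma mem_SSf {n : ℕ} {A₁ : H r} :
    A₁ ∈ SSf hz n ↔ (z A₁ ≠ 0 ∧ ν A₁ ≤ (n : ℤ) - 1) ∧ A₁ ≠ Astar := by
  classical
  simp [SSf, Finset.mem_filter, Set.Finite.mem_toFinset]

lemma Astar_not_mem_SSf {n : ℕ} : Astar ∉ SSf hz n := by
  intro h
  exact ((mem_SSf hz).1 h).2 rfl

/-- Inductive construction of the `∂_z`-constant with prescribed level-0 part. -/
noncomputable def Fc (hz : Admissible μ ν Astar z) (x₀ : H r → ℚ) : ℕ → H r → ℚ
  | 0 => fun B => if ν B = 0 then x₀ B else 0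
  | n + 1 => fun B => if ν B = (n : ℤ) + 1 then
      (-(1 : ℚ) / ((n : ℚ) + 1)) *
        ∑ A₁ ∈ SSf hz (n + 1), z A₁ (B - A₁ + Astar) * Fc hz x₀ n (B - A₁ + Astar)
    else Fc hz x₀ n B

variable {x₀ : H r → ℚ}

lemma Fc_zero_pos {B : H r} (h0 : ν B = 0) : Fc hz x₀ 0 B = x₀ B := by
  simp only [Fc]; rw [if_pos h0]

lemma Fc_zero_neg {B : H r} (h0 : ν B ≠ 0) : Fc hz x₀ 0 B = 0 := by
  simp only [Fc]; rw [if_neg h0]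

lemma Fc_succ_pos {n : ℕ} {B : H r} (h0 : ν B = (n : ℤ) + 1) :
    Fc hz x₀ (n + 1) B = (-(1 : ℚ) / ((n : ℚ) + 1)) *
      ∑ A₁ ∈ SSf hz (n + 1), z A₁ (B - A₁ + Astar) * Fc hz x₀ n (B - A₁ + Astar) := by
  simp only [Fc]; rw [if_pos h0]

lemma Fc_succ_neg {n : ℕ} {B : H r} (h0 : ν B ≠ (n : ℤ) + 1) :
    Fc hz x₀ (n + 1) B = Fc hz x₀ n B := by
  simp only [Fc]; rw [if_neg h0]

lemma Fc_supp (n : ℕ) : ∀ B : H r, Fc hz x₀ n B ≠ 0 → 0 ≤ ν B ∧ ν B ≤ (n : ℤ) := by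
  induction n with
  | zero =>
      intro B h
      by_cases h0 : ν B = 0
      · simp [h0]
      · exact absurd (Fc_zero_neg hz h0) h
  | succ n ih =>
      intro B h
      by_cases h0 : ν B = (n : ℤ) + 1
      · constructor <;> omega
      · have := ih B ((Fc_succ_neg hz h0) ▸ h)
        constructor <;> omega

lemma Fc_agree : ∀ {m n : ℕ}, m ≤ n → ∀ {B : H r}, ν B ≤ (m : ℤ) →
    Fc hz x₀ n B = Fc hz x₀ m B := by
  intro m n
  induction n with
  | zero => intro h B _; interval_cases m; rfl
  | succ n ih =>
      intro h B hB
      rcases Nat.eq_or_lt_of_le h with h1 | h1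
      · rw [h1]
      · have hm : m ≤ n := by omega
        rw [Fc_succ_neg hz (by omega), ih hm hB]

/-- The `∂_z`-constant with prescribed level-0 part `x₀`. -/
noncomputable def constz (hz : Admissible μ ν Astar z) (x₀ : H r → ℚ) : H r → ℚ :=
  fun B => Fc hz x₀ (ν B).toNat B

lemma constz_eq {n : ℕ} {B : H r} (h : ν B ≤ (n : ℤ)) :
    constz hz x₀ B = Fc hz x₀ n B := by
  have h1 : (ν B).toNat ≤ n := Int.toNat_le.2 h
  exact (Fc_agree hz h1 (Int.self_le_toNat _)).symm

lemma constz_GE0 : MemGE ν 0 (constz hz x₀) := by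
  intro B hB
  exact (Fc_supp hz _ B hB).1

lemma constz_lvl0 {B : H r} (h : ν B = 0) : constz hz x₀ B = x₀ B := by
  rw [constz_eq hz (by omega : ν B ≤ ((0:ℕ) : ℤ))]
  exact Fc_zero_pos hz h

lemma Fc_supp_finite (hfin : (Function.support x₀).Finite) :
    ∀ n : ℕ, (Function.support (Fc hz x₀ n)).Finite := by
  intro n
  induction n with
  | zero =>
      refine hfin.subset fun B hB => ?_
      have hB' : Fc hz x₀ 0 B ≠ 0 := hB
      by_cases h0 : ν B = 0
      · show x₀ B ≠ 0
        rw [← Fc_zero_pos (x₀ := x₀) hz h0]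
        exact hB'
      · exact absurd (Fc_zero_neg hz h0) hB'
  | succ n ih =>
      classical
      refine (ih.union (((SSf hz (n+1) : Finset (H r)).finite_toSet.prod ih).image
        (fun p : H r × H r => p.2 + p.1 - Astar))).subset fun B hB => ?_
      have hB' : Fc hz x₀ (n+1) B ≠ 0 := hB
      by_cases h0 : ν B = (n : ℤ) + 1
      · right
        have hsum : (∑ A₁ ∈ SSf hz (n + 1), z A₁ (B - A₁ + Astar) * Fc hz x₀ n (B - A₁ + Astar)) ≠ 0 := by
          intro h
          exact hB' (by rw [Fc_succ_pos hz h0, h, mul_zero])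
        obtain ⟨A₁, hA₁mem, hA₁⟩ := Finset.exists_ne_zero_of_sum_ne_zero hsum
        have hFc : Fc hz x₀ n (B - A₁ + Astar) ≠ 0 := fun h => hA₁ (by simp [h])
        refine ⟨⟨A₁, B - A₁ + Astar⟩, ⟨hA₁mem, hFc⟩, ?_⟩
        show (B - A₁ + Astar) + A₁ - Astar = B
        abel
      · left
        exact ((Fc_succ_neg hz h0) ▸ hB' : Fc hz x₀ n B ≠ 0)

lemma constz_nf (hfin : (Function.support x₀).Finite) : NuFinite ν (constz hz x₀) := by
  intro C
  refine (Fc_supp_finite hz hfin C.toNat).subset fun B hB => ?_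
  have h1 : ν B ≤ (C.toNat : ℤ) := le_trans hB.2 (Int.self_le_toNat C)
  rw [Function.mem_support, ← constz_eq hz h1]
  exact hB.1

lemma Fc_hom (hμA : μ Astar = 1) {d : ℤ} (hx₀ : ∀ B, x₀ B ≠ 0 → 2 * μ B = d) :
    ∀ (n : ℕ) (B : H r), Fc hz x₀ n B ≠ 0 → 2 * μ B = d := by
  intro n
  induction n with
  | zero =>
      intro B hB
      by_cases h0 : ν B = 0
      · refine hx₀ B ?_
        rw [← Fc_zero_pos (x₀ := x₀) hz h0]
        exact hB
      · exact absurd (Fc_zero_neg hz h0) hB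
  | succ n ih =>
      intro B hB
      by_cases h0 : ν B = (n : ℤ) + 1
      · have hsum : (∑ A₁ ∈ SSf hz (n + 1), z A₁ (B - A₁ + Astar) * Fc hz x₀ n (B - A₁ + Astar)) ≠ 0 := by
          intro h
          exact hB (by rw [Fc_succ_pos hz h0, h, mul_zero])
        obtain ⟨A₁, hA₁mem, hA₁⟩ := Finset.exists_ne_zero_of_sum_ne_zero hsum
        have hzne : z A₁ ≠ 0 := by
          intro h
          exact hA₁ (by simp [h])
        have hFc : Fc hz x₀ n (B - A₁ + Astar) ≠ 0 := fun h => hA₁ (by simp [h])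
        have h1 := ih _ hFc
        have h2 := hz.supp_mu A₁ hzne
        have : μ (B - A₁ + Astar) = μ B - μ A₁ + μ Astar := by simp [map_add, map_sub]
        omega
      · exact ih B ((Fc_succ_neg hz h0) ▸ hB)

lemma constz_hom (hμA : μ Astar = 1) {d : ℤ} (hx₀ : ∀ B, x₀ B ≠ 0 → 2 * μ B = d) :
    ∀ B, constz hz x₀ B ≠ 0 → 2 * μ B = d := fun B hB =>
  Fc_hom hz hμA hx₀ _ B hB

/-- The construction is indeed a `∂_z`-constant. -/
lemma dz_constz (hνA : ν Astar = -1) : dz z (constz hz x₀) = 0 := by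
  classical
  funext A
  set x : H r → ℚ := constz hz x₀ with hxdef
  have hre : dz z x A = ∑ᶠ A₁ : H r, z A₁ (A - A₁) * x (A - A₁) := by
    refine finsum_eq_of_bijective (fun B => A - B)
      ⟨fun a b hab => by simpa using congrArg (fun t => A - t) hab,
       fun B => ⟨A - B, sub_sub_cancel A B⟩⟩ fun B => ?_
    rw [sub_sub_cancel]
  rw [Pi.zero_apply, hre]
  rcases le_or_gt (ν A + 1) 0 with hcase | hcase
  · -- low level: all terms vanish
    refine finsum_eq_zero_of_forall_eq_zero fun A₁ => ?_
    rcases eq_or_ne (x (A - A₁)) 0 with h0 | h0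
    · simp [h0]
    · have hge := constz_GE0 hz _ h0
      have hs := nu_add_sub (ν := ν) A A₁
      rcases eq_or_ne A₁ Astar with he | he
      · have h5 : ν (A - A₁) = 0 := by
          rw [he] at hs hge ⊢
          omega
        rw [he, hz.at_star]
        rw [he] at h5
        rw [h5]
        simp
      · have : ν A₁ < 0 := by omega
        rw [hz.vanish_neg A₁ he this]
        simp
  · -- main level
    set n : ℕ := (ν A + 1).toNat with hn
    have hnval : (n : ℤ) = ν A + 1 := Int.toNat_of_nonneg (by omega)
    obtain ⟨m, hm⟩ : ∃ m : ℕ, n = m + 1 := ⟨n - 1, by omega⟩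
    have hsupp : (Function.support fun A₁ => z A₁ (A - A₁) * x (A - A₁)) ⊆
        (insert Astar (SSf hz n) : Finset (H r)) := by
      intro A₁ hA₁
      have hA₁' : z A₁ (A - A₁) * x (A - A₁) ≠ 0 := hA₁
      have hzne : z A₁ ≠ 0 := fun h => hA₁' (by simp [h])
      have hxne : x (A - A₁) ≠ 0 := fun h => hA₁' (by simp [h])
      have hge := constz_GE0 hz _ hxne
      have hs := nu_add_sub (ν := ν) A A₁
      rcases eq_or_ne A₁ Astar with he | he
      · simp [he]
      · rcases z_apply_ne_zero hz hzne with h | h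
        · exact absurd h he
        · simp only [Finset.coe_insert, Set.mem_insert_iff, Finset.mem_coe]
          right
          exact (mem_SSf hz).2 ⟨⟨hzne, by omega⟩, he⟩
    rw [finsum_eq_finset_sum_of_support_subset _ hsupp,
        Finset.sum_insert (Astar_not_mem_SSf hz)]
    have hB₀ : ν (A - Astar) = (n : ℤ) := by
      have := nu_add_sub (ν := ν) A Astar
      omega
    have hxB₀ : x (A - Astar) = Fc hz x₀ n (A - Astar) := constz_eq hz (le_of_eq hB₀)
    have hFcB₀ : Fc hz x₀ n (A - Astar) =
        (-(1 : ℚ) / ((m : ℚ) + 1)) *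
          ∑ A₁ ∈ SSf hz n, z A₁ ((A - Astar) - A₁ + Astar) * Fc hz x₀ m ((A - Astar) - A₁ + Astar) := by
      have hcond : ν (A - Astar) = (m : ℤ) + 1 := by rw [hB₀, hm]; push_cast; ring
      rw [hm, Fc_succ_pos hz hcond, ← hm]
    have hterm : ∀ A₁ ∈ SSf hz n,
        z A₁ (A - A₁) * x (A - A₁) =
          z A₁ ((A - Astar) - A₁ + Astar) * Fc hz x₀ m ((A - Astar) - A₁ + Astar) := by
      intro A₁ hA₁
      obtain ⟨⟨hzne, hle⟩, hne⟩ := (mem_SSf hz).1 hA₁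
      have harg : (A - Astar) - A₁ + Astar = A - A₁ := by abel
      rw [harg]
      congr 1
      have hs := nu_add_sub (ν := ν) A A₁
      rcases z_apply_ne_zero hz hzne with h | h
      · exact absurd h hne
      · exact constz_eq hz (by omega)
    rw [hz.at_star, hB₀, hxB₀, hFcB₀, Finset.sum_congr rfl hterm]
    have hmne : ((m : ℚ) + 1) ≠ 0 := by positivity
    have hcast : ((n : ℤ) : ℚ) = (m : ℚ) + 1 := by rw [hm]; push_cast; ring
    rw [hcast]
    field_simp
    ring

end Constz

end NovProof
namespace NovProof
open Nov

variable {r : ℕ} {μ ν : H r →+ ℤ}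

lemma delta_mul_delta (D E : H r) : Nov.mul (delta D) (delta E) = delta (D + E) := by
  rw [delta_mul]
  funext A
  by_cases h : A = D + E
  · have : A - D = E := by rw [h]; abel
    simp [delta, this, h]
  · have : A - D ≠ E := fun h0 => h (by rw [← h0]; abel)
    simp [delta, this, h]

lemma memGE_neg {k : ℤ} {x : H r → ℚ} (hx : MemGE ν k x) : MemGE ν k (-x) :=
  fun A hA => hx A (fun h => hA (by simp [Pi.neg_apply, h]))

lemma memHom_one : MemHom μ ν 0 (one r) := by
  have := memHom_delta (μ := μ) (ν := ν) (0 : H r)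
  simpa [one] using this

lemma memHom_congr {i j : ℤ} {x : H r → ℚ} (h : i = j) (hx : MemHom μ ν i x) :
    MemHom μ ν j x := h ▸ hx

end NovProof
namespace NovProof
open Nov

variable {r : ℕ}

section Main

variable {μ ν : H r →+ ℤ} {Astar : H r} {z : H r → (H r →+ ℚ)} {i : ℤ} {f : H r → ℚ}

/-- Existence part. -/
lemma existence (hμA : μ Astar = 1) (hνA : ν Astar = -1)
    (hz : Admissible μ ν Astar z)
    (hf : MemHom μ ν i f) (hge : MemGE ν 1 f)
    (y : H r → ℚ) (hyL : MemLambda μ ν y) (hyGE : MemGE ν 0 y)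
    (hgy : Nov.mul (Nov.mul (delta Astar) f) y = one r)
    (hyg : Nov.mul y (Nov.mul (delta Astar) f) = one r) :
    ∃ f' : H r → ℚ,
      (MemHom μ ν (-2) f' ∧
        MemLambda μ ν (f' - delta (-Astar)) ∧
        MemGE ν 3 (f' - delta (-Astar))) ∧
      ∃ (k : ℤ) (a b c : H r → ℚ),
        MemHom μ ν k a ∧ MemGE ν 0 a ∧ dz z a = 0 ∧
        (∃ ya, MemLambda μ ν ya ∧ MemGE ν 0 ya ∧
          Nov.mul a ya = one r ∧ Nov.mul ya a = one r) ∧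
        MemHom μ ν (k - i) b ∧ MemGE ν 0 b ∧ dz z b = 0 ∧
        MemLambda μ ν c ∧ Nov.mul (a + Nov.mul b f) c = one r ∧
        Nov.mul c (a + Nov.mul b f) = one r ∧
        f' = Nov.mul f c := by
  classical
  have hfnf : NuFinite ν f := hf.2
  set g : H r → ℚ := Nov.mul (delta Astar) f with hgdef
  have hgnf : NuFinite ν g := nf_mul (nf_delta _) hfnf
  have hgGE0 : MemGE ν 0 g := by
    have := memGE_mul (memGE_delta (ν := ν) (D := Astar)) hge
    rw [hνA] at this
    simpa using this
  have hghom : MemHom μ ν (i + 2) g := by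
    refine memHom_congr ?_ (memHom_mul (memHom_delta Astar) hf)
    rw [hμA]; ring
  -- homogeneous inverse
  set y' : H r → ℚ := fun A => if 2 * μ A = -(i + 2) then y A else 0 with hy'def
  have hy'sub : ∀ A, y' A ≠ 0 → y A ≠ 0 ∧ 2 * μ A = -(i + 2) := by
    intro A hA
    by_cases h : 2 * μ A = -(i + 2)
    · exact ⟨by rwa [show y' A = y A from if_pos h] at hA, h⟩
    · exact absurd (if_neg h : y' A = 0) hA
  have hy'nf : NuFinite ν y' := nf_subset hyL.1 fun A hA => (hy'sub A hA).1
  have hy'GE0 : MemGE ν 0 y' := fun A hA => hyGE A (hy'sub A hA).1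
  have hy'hom : ∀ A, y' A ≠ 0 → 2 * μ A = -(i + 2) := fun A hA => (hy'sub A hA).2
  have hgy' : Nov.mul g y' = one r := by
    funext A
    by_cases hA : 2 * μ A = 0
    · have hterm : ∀ B : H r, g B * y' (A - B) = g B * y (A - B) := by
        intro B
        rcases eq_or_ne (g B) 0 with h0 | h0
        · simp [h0]
        · have h1 := hghom.1 B h0
          have h2 : μ B + μ (A - B) = μ A := nu_add_sub (ν := μ) A B
          have h3 : 2 * μ (A - B) = -(i + 2) := by omega
          rw [show y' (A - B) = y (A - B) from if_pos h3]
      have : Nov.mul g y' A = Nov.mul g y A := by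
        simp only [Nov.mul]
        exact finsum_congr hterm
      rw [this, hgy]
    · have h1 : one r A = 0 := one_apply (by
        intro h0
        exact hA (by rw [h0, map_zero, mul_zero]))
      have h2 : Nov.mul g y' A = 0 := by
        simp only [Nov.mul]
        refine finsum_eq_zero_of_forall_eq_zero fun B => ?_
        rcases eq_or_ne (g B) 0 with h0 | h0
        · simp [h0]
        · rcases eq_or_ne (y' (A - B)) 0 with h3 | h3
          · simp [h3]
          · exfalso
            have h4 := hghom.1 B h0
            have h5 := hy'hom _ h3
            have h6 : μ B + μ (A - B) = μ A := nu_add_sub (ν := μ) A B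
            omega
      rw [h1, h2]
  have hy'g : Nov.mul y' g = one r := by rw [mul_comm']; exact hgy'
  -- level-0 parts
  set g₀ : H r → ℚ := lvl0 ν g with hg₀def
  set y₀ : H r → ℚ := lvl0 ν y' with hy₀def
  have hg₀nf : NuFinite ν g₀ := lvl0_nf hgnf
  have hy₀nf : NuFinite ν y₀ := lvl0_nf hy'nf
  have hg₀y₀ : Nov.mul g₀ y₀ = one r := by
    rw [hg₀def, hy₀def, mul_lvl0 hgGE0 hy'GE0, hgy', lvl0_one]
  have hg₀hom : ∀ B, g₀ B ≠ 0 → 2 * μ B = i + 2 := fun B hB =>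
    hghom.1 B (lvl0_apply_ne hB).2
  have hg₀fin : (Function.support g₀).Finite := by
    refine (hgnf 0).subset fun B hB => ?_
    have hB' : g₀ B ≠ 0 := hB
    obtain ⟨h1, h2⟩ := lvl0_apply_ne hB'
    exact ⟨h2, le_of_eq h1⟩
  -- the constant a
  set a : H r → ℚ := constz hz g₀ with hadef
  have hadz : dz z a = 0 := dz_constz hz hνA
  have hanf : NuFinite ν a := constz_nf hz hg₀fin
  have haGE0 : MemGE ν 0 a := constz_GE0 hz
  have hahom : MemHom μ ν (i + 2) a := ⟨constz_hom hz hμA hg₀hom, hanf⟩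
  have halvl0 : lvl0 ν a = g₀ := by
    funext B
    by_cases hB : ν B = 0
    · show (if ν B = 0 then a B else 0) = g₀ B
      rw [if_pos hB, hadef, constz_lvl0 hz hB]
    · show (if ν B = 0 then a B else 0) = g₀ B
      rw [if_neg hB]
      exact (if_neg hB).symm
  -- invert a
  have hhGE1 : MemGE ν 1 (a - g₀) := by
    have := sub_lvl0_GE1 haGE0
    rwa [halvl0] at this
  have hhnf : NuFinite ν (a - g₀) := nf_sub hanf hg₀nf
  set va : H r → ℚ := Nov.mul y₀ (a - g₀) with hvadef
  have hvanf : NuFinite ν va := nf_mul hy₀nf hhnf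
  have hvaGE1 : MemGE ν 1 va := by
    have := memGE_mul (lvl0_GE0 (x := y')) hhGE1
    simpa using this
  set wa : H r → ℚ := geom ν (-va) with hwadef
  have hwanf : NuFinite ν wa := geom_nf (nf_neg hvanf)
  have hwa : Nov.mul (one r + va) wa = one r := by
    have := one_sub_mul_geom (nf_neg hvanf) (memGE_neg hvaGE1)
    rwa [sub_neg_eq_add] at this
  have hwaGE0 : MemGE ν 0 wa := geom_GE0 (memGE_neg hvaGE1)
  have hg₀GE0 : MemGE ν 0 g₀ := lvl0_GE0
  have hy₀GE0 : MemGE ν 0 y₀ := lvl0_GE0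
  have hfact : Nov.mul (one r + va) g₀ = a := by
    rw [add_mul' nf_one hvanf hg₀GE0, one_mul']
    have h1 : Nov.mul va g₀ = a - g₀ := by
      rw [hvadef, mul_comm', mul_assoc' hg₀nf hy₀nf hhnf |>.symm, hg₀y₀, one_mul']
    rw [h1, add_comm, sub_add_cancel]
  set ya : H r → ℚ := Nov.mul y₀ wa with hyadef
  have hyanf : NuFinite ν ya := nf_mul hy₀nf hwanf
  have haya : Nov.mul a ya = one r := by
    rw [← hfact, mul_assoc' (nf_add nf_one hvanf) hg₀nf hyanf, hyadef,
        ← mul_assoc' hg₀nf hy₀nf hwanf, hg₀y₀, one_mul']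
    exact hwa
  have hyaa : Nov.mul ya a = one r := by rw [mul_comm']; exact haya
  have hy₀hom : ∀ A, y₀ A ≠ 0 → 2 * μ A = -(i + 2) := fun A hA =>
    hy'hom A (lvl0_apply_ne hA).2
  have hhhom : ∀ A, (a - g₀) A ≠ 0 → 2 * μ A = i + 2 :=
    (memHom_sub hahom ⟨hg₀hom, hg₀nf⟩).1
  have hvahom : ∀ A, va A ≠ 0 → 2 * μ A = 0 := by
    intro A hA
    have := hom_mul hy₀hom hhhom A hA
    omega
  have hwahom : ∀ A, wa A ≠ 0 → 2 * μ A = 0 :=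
    geom_hom fun A hA => hvahom A (by simpa using hA)
  have hyahom : ∀ A, ya A ≠ 0 → 2 * μ A = -(i + 2) := by
    intro A hA
    have := hom_mul hy₀hom hwahom A hA
    omega
  have hyaL : MemLambda μ ν ya := memLambda_of_memHom ⟨hyahom, hyanf⟩
  have hyaGE0 : MemGE ν 0 ya := by
    have := memGE_mul hy₀GE0 hwaGE0
    simpa using this
  -- the constant b
  set t : H r → ℚ := Nov.mul a y' with htdef
  have htnf : NuFinite ν t := nf_mul hanf hy'nf
  have htGE0 : MemGE ν 0 t := by
    have := memGE_mul haGE0 hy'GE0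
    simpa using this
  have hthom : ∀ A, t A ≠ 0 → 2 * μ A = 0 := by
    intro A hA
    have := hom_mul hahom.1 hy'hom A hA
    omega
  set b₀ : H r → ℚ := fun B => if ν B = 0 then -(t (B - Astar)) else 0 with hb₀def
  have hb₀cases : ∀ B, b₀ B ≠ 0 → ν B = 0 ∧ t (B - Astar) ≠ 0 := by
    intro B hB
    by_cases h : ν B = 0
    · refine ⟨h, ?_⟩
      have : b₀ B = -(t (B - Astar)) := if_pos h
      intro h0
      exact hB (by rw [this, h0, neg_zero])
    · exact absurd (if_neg h : b₀ B = 0) hB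
  have hb₀fin : (Function.support b₀).Finite := by
    refine ((htnf 1).image (fun C => C + Astar)).subset fun B hB => ?_
    obtain ⟨h1, h2⟩ := hb₀cases B hB
    refine ⟨B - Astar, ⟨h2, ?_⟩, sub_add_cancel B Astar⟩
    have := nu_add_sub (ν := ν) B Astar
    omega
  have hb₀hom : ∀ B, b₀ B ≠ 0 → 2 * μ B = 2 := by
    intro B hB
    obtain ⟨h1, h2⟩ := hb₀cases B hB
    have h3 := hthom _ h2
    have h4 : μ (B - Astar) + μ Astar = μ B := by
      rw [← map_add]; congr 1; abel
    omega
  set b : H r → ℚ := constz hz b₀ with hbdef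
  have hbdz : dz z b = 0 := dz_constz hz hνA
  have hbnf : NuFinite ν b := constz_nf hz hb₀fin
  have hbGE0 : MemGE ν 0 b := constz_GE0 hz
  have hbhom : MemHom μ ν 2 b := ⟨constz_hom hz hμA hb₀hom, hbnf⟩
  -- the element u
  have hbfnf : NuFinite ν (Nov.mul b f) := nf_mul hbnf hfnf
  have habfnf : NuFinite ν (a + Nov.mul b f) := nf_add hanf hbfnf
  have hg_eq : ∀ A, g A = f (A - Astar) := fun A => congrFun (delta_mul Astar f) A
  have hf_eq : Nov.mul (delta (-Astar)) g = f := by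
    rw [delta_mul]
    funext A
    rw [hg_eq]
    congr 1
    abel
  have hfy' : Nov.mul f y' = delta (-Astar) := by
    rw [← hf_eq, mul_assoc' (nf_delta _) hgnf hy'nf, hgy', mul_one']
  have hbfy' : Nov.mul (Nov.mul b f) y' = fun A => b (A - -Astar) := by
    rw [mul_assoc' hbnf hfnf hy'nf, hfy', mul_delta]
  set u : H r → ℚ := Nov.mul (a + Nov.mul b f) y' with hudef
  have hu_decomp : u = t + fun A => b (A - -Astar) := by
    rw [hudef, add_mul' hanf hbfnf hy'GE0, hbfy', htdef]
  have hunf : NuFinite ν u := nf_mul habfnf hy'nf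
  have hlvl0t : lvl0 ν t = one r := by
    rw [htdef, ← mul_lvl0 haGE0 hy'GE0, halvl0, ← hy₀def, hg₀y₀]
  have hnuB : ∀ A : H r, ν (A - -Astar) = ν A - 1 := by
    intro A
    rw [map_sub, map_neg, hνA]
    ring
  have huGE2 : MemGE ν 2 (u - one r) := by
    intro A hA
    by_contra hlt
    push_neg at hlt
    apply hA
    have huA : u A = t A + b (A - -Astar) := congrFun hu_decomp A
    have hnu := hnuB A
    show u A - one r A = 0
    rcases lt_trichotomy (ν A) 1 with hc | hc | hc
    · rcases eq_or_lt_of_le (by omega : ν A ≤ 0) with hc0 | hc0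
      · -- ν A = 0
        have hb0 : b (A - -Astar) = 0 := by
          by_contra h
          have := hbGE0 _ h
          omega
        have ht0 : t A = one r A := by
          have := congrFun hlvl0t A
          rwa [show lvl0 ν t A = t A from if_pos hc0] at this
        rw [huA, hb0, ht0]
        ring
      · -- ν A < 0
        have hb0 : b (A - -Astar) = 0 := by
          by_contra h
          have := hbGE0 _ h
          omega
        have ht0 : t A = 0 := by
          by_contra h
          have := htGE0 _ h
          omega
        have hone : one r A = 0 := one_apply (by
          intro h
          rw [h, map_zero] at hc0
          omega)
        rw [huA, hb0, ht0, hone]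
        ring
    · -- ν A = 1
      have hone : one r A = 0 := one_apply (by
        intro h
        rw [h, map_zero] at hc
        omega)
      have hb0 : b (A - -Astar) = b₀ (A - -Astar) := constz_lvl0 hz (by omega)
      have harg : (A - -Astar) - Astar = A := by abel
      have hb1 : b₀ (A - -Astar) = -(t A) := by
        have : b₀ (A - -Astar) = -(t ((A - -Astar) - Astar)) := if_pos (by omega)
        rw [this, harg]
      rw [huA, hb0, hb1, hone]
      ring
    · omega
  have habfhom : MemHom μ ν (i + 2) (a + Nov.mul b f) :=
    memHom_add hahom (memHom_congr (by ring) (memHom_mul hbhom hf))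
  have hu_hom : ∀ A, u A ≠ 0 → 2 * μ A = 0 := by
    intro A hA
    have := hom_mul habfhom.1 hy'hom A hA
    omega
  set vu : H r → ℚ := u - one r with hvudef
  have hvunf : NuFinite ν vu := nf_sub hunf nf_one
  have hvuhom : MemHom μ ν 0 vu := memHom_sub ⟨hu_hom, hunf⟩ memHom_one
  set wu : H r → ℚ := geom ν (-vu) with hwudef
  have hwunf : NuFinite ν wu := geom_nf (nf_neg hvunf)
  have hwu : Nov.mul u wu = one r := by
    have h1 := one_sub_mul_geom (nf_neg hvunf)
      (memGE_neg (memGE_mono (by norm_num) huGE2))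
    have h2 : one r - -vu = u := by
      rw [sub_neg_eq_add, hvudef]
      abel
    rwa [h2] at h1
  have hwuGE0 : MemGE ν 0 wu := geom_GE0 (memGE_neg (memGE_mono (by norm_num) huGE2))
  have hwusub2 : MemGE ν 2 (wu - one r) :=
    geom_sub_one_GE (by norm_num) (memGE_neg huGE2)
  have hwuhom : ∀ A, wu A ≠ 0 → 2 * μ A = 0 :=
    geom_hom fun A hA => hvuhom.1 A (by simpa using hA)
  -- the inverse c and the normalized element f'
  set c : H r → ℚ := Nov.mul y' wu with hcdef
  have hcnf : NuFinite ν c := nf_mul hy'nf hwunf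
  have hchom : MemHom μ ν (-(i + 2)) c := by
    refine ⟨fun A hA => ?_, hcnf⟩
    have := hom_mul hy'hom hwuhom A hA
    omega
  have hcL : MemLambda μ ν c := memLambda_of_memHom hchom
  have hc1 : Nov.mul (a + Nov.mul b f) c = one r := by
    rw [hcdef, ← mul_assoc' habfnf hy'nf hwunf, ← hudef]
    exact hwu
  have hc2 : Nov.mul c (a + Nov.mul b f) = one r := by rw [mul_comm']; exact hc1
  have hf'eq : Nov.mul f c = Nov.mul (delta (-Astar)) wu := by
    rw [hcdef, ← mul_assoc' hfnf hy'nf hwunf, hfy']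
  have hmuneg : 2 * μ (-Astar) = -2 := by
    rw [map_neg, hμA]; norm_num
  have hf'hom : MemHom μ ν (-2) (Nov.mul f c) := by
    rw [hf'eq]
    exact memHom_congr (by rw [hmuneg]; norm_num) (memHom_mul (memHom_delta (-Astar)) ⟨hwuhom, hwunf⟩)
  have hdiff : Nov.mul f c - delta (-Astar) = Nov.mul (delta (-Astar)) (wu - one r) := by
    rw [mul_comm' (delta (-Astar)), sub_mul' hwunf nf_one memGE_delta,
        mul_comm' wu, one_mul', hf'eq, mul_comm' (delta (-Astar)) wu]
  have hnuneg : ν (-Astar) = 1 := by rw [map_neg, hνA]; ring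
  have hdiffGE3 : MemGE ν 3 (Nov.mul f c - delta (-Astar)) := by
    rw [hdiff]
    have := memGE_mul (memGE_delta (ν := ν) (D := -Astar)) hwusub2
    rw [hnuneg] at this
    exact memGE_mono (by norm_num) this
  have hdiffhom : MemHom μ ν (-2) (Nov.mul f c - delta (-Astar)) :=
    memHom_sub hf'hom (memHom_congr hmuneg (memHom_delta (-Astar)))
  refine ⟨Nov.mul f c, ⟨hf'hom, memLambda_of_memHom hdiffhom, hdiffGE3⟩,
    i + 2, a, b, c, hahom, haGE0, hadz,
    ⟨ya, hyaL, hyaGE0, haya, hyaa⟩,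
    memHom_congr (by ring) hbhom, hbGE0, hbdz, hcL, hc1, hc2, rfl⟩

end Main

end NovProof
namespace NovProof
open Nov

variable {r : ℕ}

section Uniq

variable {μ ν : H r →+ ℤ} {Astar : H r} {z : H r → (H r →+ ℚ)} {i : ℤ} {f : H r → ℚ}

lemma uniqueness (hνA : ν Astar = -1)
    (hz : Admissible μ ν Astar z)
    (hf : MemHom μ ν i f) (hge : MemGE ν 1 f)
    (y : H r → ℚ) (hyL : MemLambda μ ν y) (hyGE : MemGE ν 0 y)
    (hgy : Nov.mul (Nov.mul (delta Astar) f) y = one r)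
    {f₁ f₂ a₁ b₁ c₁ a₂ b₂ c₂ : H r → ℚ}
    (hd₁ : MemGE ν 3 (f₁ - delta (-Astar))) (hd₂ : MemGE ν 3 (f₂ - delta (-Astar)))
    (ha₁nf : NuFinite ν a₁) (ha₂nf : NuFinite ν a₂)
    (hb₁nf : NuFinite ν b₁) (hb₂nf : NuFinite ν b₂)
    (hb₁GE : MemGE ν 0 b₁) (hb₂GE : MemGE ν 0 b₂)
    (hdza₁ : dz z a₁ = 0) (hdza₂ : dz z a₂ = 0)
    (hdzb₁ : dz z b₁ = 0) (hdzb₂ : dz z b₂ = 0)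
    (hc₁nf : NuFinite ν c₁) (hc₂nf : NuFinite ν c₂)
    (h₁c : Nov.mul (a₁ + Nov.mul b₁ f) c₁ = one r)
    (hc₁ : Nov.mul c₁ (a₁ + Nov.mul b₁ f) = one r)
    (h₂c : Nov.mul (a₂ + Nov.mul b₂ f) c₂ = one r)
    (hc₂ : Nov.mul c₂ (a₂ + Nov.mul b₂ f) = one r)
    (hf₁ : f₁ = Nov.mul f c₁) (hf₂ : f₂ = Nov.mul f c₂) :
    f₁ = f₂ := by
  classical
  have hfnf : NuFinite ν f := hf.2
  have hynf : NuFinite ν y := hyL.1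
  set g : H r → ℚ := Nov.mul (delta Astar) f with hgdef
  have hgnf : NuFinite ν g := nf_mul (nf_delta _) hfnf
  have hgGE0 : MemGE ν 0 g := by
    have := memGE_mul (memGE_delta (ν := ν) (D := Astar)) hge
    rw [hνA] at this
    simpa using this
  have hzero : -Astar + Astar = (0 : H r) := by abel
  -- mul f y = delta (-Astar)
  have hfy : Nov.mul f y = delta (-Astar) := by
    have h1 : Nov.mul (delta Astar) (Nov.mul f y) = one r := by
      rw [← mul_assoc' (nf_delta _) hfnf hynf]
      exact hgy
    have h2 : Nov.mul (delta (-Astar)) (Nov.mul (delta Astar) (Nov.mul f y)) =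
        Nov.mul (delta (-Astar)) (one r) := by rw [h1]
    rw [← mul_assoc' (nf_delta _) (nf_delta _) (nf_mul hfnf hynf), delta_mul_delta,
        hzero, mul_one'] at h2
    rw [show delta (0 : H r) = one r from rfl, one_mul'] at h2
    exact h2
  set e : H r → ℚ := Nov.mul y (delta Astar) with hedef
  have henf : NuFinite ν e := nf_mul hynf (nf_delta _)
  have heGE : MemGE ν (-1) e := by
    have := memGE_mul hyGE (memGE_delta (ν := ν) (D := Astar))
    rw [hνA] at this
    simpa using this
  have hfe : Nov.mul f e = one r := by
    rw [hedef, ← mul_assoc' hfnf hynf (nf_delta _), hfy, delta_mul_delta, hzero]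
    rfl
  -- per-index analysis
  have key : ∀ (fj aj bj cj : H r → ℚ), NuFinite ν aj → NuFinite ν bj →
      NuFinite ν cj → MemGE ν 3 (fj - delta (-Astar)) →
      Nov.mul cj (aj + Nov.mul bj f) = one r →
      Nov.mul (aj + Nov.mul bj f) cj = one r → fj = Nov.mul f cj →
      ∃ wj : H r → ℚ, NuFinite ν wj ∧ MemGE ν 2 (wj - one r) ∧
        aj + Nov.mul bj f = Nov.mul g wj := by
    intro fj aj bj cj hajnf hbjnf hcjnf hdj hcjab habcj hfjeq
    have hfjnf : NuFinite ν fj := by rw [hfjeq]; exact nf_mul hfnf hcjnf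
    have hdnf : NuFinite ν (fj - delta (-Astar)) := nf_sub hfjnf (nf_delta _)
    set εj : H r → ℚ := Nov.mul (delta Astar) (fj - delta (-Astar)) with hεdef
    have hεnf : NuFinite ν εj := nf_mul (nf_delta _) hdnf
    have hεGE2 : MemGE ν 2 εj := by
      have := memGE_mul (memGE_delta (ν := ν) (D := Astar)) hdj
      rw [hνA] at this
      exact memGE_mono (by norm_num) this
    have hGj : Nov.mul (delta Astar) fj = one r + εj := by
      have h3 : εj = Nov.mul (delta Astar) fj - one r := by
        rw [hεdef, mul_comm' (delta Astar), sub_mul' hfjnf (nf_delta _)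
          (memGE_delta (ν := ν) (D := Astar)), mul_comm' fj, mul_comm' (delta (-Astar)),
          delta_mul_delta, show Astar + -Astar = (0 : H r) by abel]
        rfl
      rw [h3]
      abel
    set wj : H r → ℚ := geom ν (-εj) with hwjdef
    have hwjnf : NuFinite ν wj := geom_nf (nf_neg hεnf)
    have hwj : Nov.mul (Nov.mul (delta Astar) fj) wj = one r := by
      have h4 := one_sub_mul_geom (nf_neg hεnf) (memGE_neg (memGE_mono (by norm_num) hεGE2))
      rw [sub_neg_eq_add] at h4
      rw [hGj]
      exact h4
    have hwjsub : MemGE ν 2 (wj - one r) :=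
      geom_sub_one_GE (by norm_num) (memGE_neg hεGE2)
    have hgcj : Nov.mul g cj = Nov.mul (delta Astar) fj := by
      rw [hgdef, mul_assoc' (nf_delta _) hfnf hcjnf, ← hfjeq]
    have hXj : Nov.mul cj (Nov.mul g wj) = one r := by
      rw [← mul_assoc' hcjnf hgnf hwjnf, mul_comm' cj g, hgcj]
      exact hwj
    have habjnf : NuFinite ν (aj + Nov.mul bj f) := nf_add hajnf (nf_mul hbjnf hfnf)
    have := inv_unique hcjnf (nf_mul hgnf hwjnf) habjnf hXj habcj
    exact ⟨wj, hwjnf, hwjsub, this.symm⟩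
  obtain ⟨w₁, hw₁nf, hw₁sub, hab₁⟩ := key f₁ a₁ b₁ c₁ ha₁nf hb₁nf hc₁nf hd₁ hc₁ h₁c hf₁
  obtain ⟨w₂, hw₂nf, hw₂sub, hab₂⟩ := key f₂ a₂ b₂ c₂ ha₂nf hb₂nf hc₂nf hd₂ hc₂ h₂c hf₂
  -- difference analysis
  have hwdGE2 : MemGE ν 2 (w₂ - w₁) := by
    have h1 := memGE_sub_min hw₂sub hw₁sub
    rw [min_self] at h1
    have h2 : (w₂ - one r) - (w₁ - one r) = w₂ - w₁ := sub_sub_sub_cancel_right _ _ _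
    rwa [h2] at h1
  have hgw : Nov.mul g (w₂ - w₁) = Nov.mul g w₂ - Nov.mul g w₁ := by
    rw [mul_comm' g, sub_mul' hw₂nf hw₁nf hgGE0, mul_comm' w₂, mul_comm' w₁]
  have hsubGE2 : MemGE ν 2 ((a₂ + Nov.mul b₂ f) - (a₁ + Nov.mul b₁ f)) := by
    rw [hab₁, hab₂, ← hgw]
    have := memGE_mul hgGE0 hwdGE2
    simpa using this
  have hβmul : Nov.mul (b₂ - b₁) f = Nov.mul b₂ f - Nov.mul b₁ f :=
    sub_mul' hb₂nf hb₁nf hge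
  have hdecomp : (a₂ + Nov.mul b₂ f) - (a₁ + Nov.mul b₁ f) =
      (a₂ - a₁) + Nov.mul (b₂ - b₁) f := by
    rw [hβmul]; abel
  have hβfGE1 : MemGE ν 1 (Nov.mul (b₂ - b₁) f) := by
    have h1 := memGE_sub_min hb₂GE hb₁GE
    rw [min_self] at h1
    have := memGE_mul h1 hge
    simpa using this
  have hαGE1 : MemGE ν 1 (a₂ - a₁) := by
    have h1 := memGE_sub_min hsubGE2 hβfGE1
    rw [(by norm_num : min (2:ℤ) 1 = 1)] at h1
    have h2 : ((a₂ + Nov.mul b₂ f) - (a₁ + Nov.mul b₁ f)) - Nov.mul (b₂ - b₁) f =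
        a₂ - a₁ := by rw [hdecomp]; abel
    rwa [h2] at h1
  have hα0 : a₂ - a₁ = 0 := by
    refine dz_const_GE1_eq_zero hz hνA (nf_sub ha₂nf ha₁nf) hαGE1 ?_
    rw [dz_sub hz hνA ha₂nf ha₁nf, hdza₂, hdza₁, sub_zero]
  have hβGE2 : MemGE ν 2 (Nov.mul (b₂ - b₁) f) := by
    have h2 : Nov.mul (b₂ - b₁) f = (a₂ + Nov.mul b₂ f) - (a₁ + Nov.mul b₁ f) := by
      rw [hdecomp, hα0, zero_add]
    rw [h2]
    exact hsubGE2
  have hβeq : b₂ - b₁ = Nov.mul (Nov.mul (b₂ - b₁) f) e := by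
    rw [mul_assoc' (nf_sub hb₂nf hb₁nf) hfnf henf, hfe, mul_one']
  have hβGE1 : MemGE ν 1 (b₂ - b₁) := by
    rw [hβeq]
    have := memGE_mul hβGE2 heGE
    simpa using this
  have hβ0 : b₂ - b₁ = 0 := by
    refine dz_const_GE1_eq_zero hz hνA (nf_sub hb₂nf hb₁nf) hβGE1 ?_
    rw [dz_sub hz hνA hb₂nf hb₁nf, hdzb₂, hdzb₁, sub_zero]
  have ha21 : a₂ = a₁ := sub_eq_zero.1 hα0
  have hb21 : b₂ = b₁ := sub_eq_zero.1 hβ0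
  have hab : a₂ + Nov.mul b₂ f = a₁ + Nov.mul b₁ f := by rw [ha21, hb21]
  have hc12 : c₁ = c₂ := by
    refine inv_unique (nf_add ha₁nf (nf_mul hb₁nf hfnf)) hc₁nf hc₂nf h₁c ?_
    rw [← hab]
    exact hc₂
  rw [hf₁, hf₂, hc12]

end Uniq

end NovProof
open Nov in
/-- Each orbit of the transformations `f ↦ f·(a + b·f)⁻¹` (with
`∂_z`-constant homogeneous `a` invertible in `Λ_{≥0}` and `b`) on the domain
of homogeneous `f ∈ Λ^i_{≥1}` of even degree with `q^{A_*}·f` invertible in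
`Λ_{≥0}` contains a unique element of `q^{−A_*} + Λ^{−2}_{≥3}`. -/
theorem orbit_contains_unique_normalized_element (r : ℕ) (μ ν : H r →+ ℤ)
    (Astar : H r) (hμA : μ Astar = 1) (hνA : ν Astar = -1)
    (z : H r → (H r →+ ℚ)) (hz : Admissible μ ν Astar z)
    (i : ℤ) (hi : Even i) (f : H r → ℚ)
    (hf : MemHom μ ν i f) (hge : MemGE ν 1 f)
    (hinv : ∃ y, MemLambda μ ν y ∧ MemGE ν 0 y ∧
        mul (mul (delta Astar) f) y = one r ∧
        mul y (mul (delta Astar) f) = one r) :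
    ∃! f' : H r → ℚ,
      (MemHom μ ν (-2) f' ∧
        MemLambda μ ν (f' - delta (-Astar)) ∧
        MemGE ν 3 (f' - delta (-Astar))) ∧
      ∃ (k : ℤ) (a b c : H r → ℚ),
        MemHom μ ν k a ∧ MemGE ν 0 a ∧ dz z a = 0 ∧
        (∃ y, MemLambda μ ν y ∧ MemGE ν 0 y ∧
          mul a y = one r ∧ mul y a = one r) ∧
        MemHom μ ν (k - i) b ∧ MemGE ν 0 b ∧ dz z b = 0 ∧
        MemLambda μ ν c ∧ mul (a + mul b f) c = one r ∧
        mul c (a + mul b f) = one r ∧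
        f' = mul f c := by
  obtain ⟨y, hyL, hyGE, hgy, hyg⟩ := hinv
  obtain ⟨f', hf'prop, k, a, b, c, hdata⟩ :=
    NovProof.existence hμA hνA hz hf hge y hyL hyGE hgy hyg
  refine ⟨f', ⟨hf'prop, k, a, b, c, hdata⟩, ?_⟩
  rintro f'' ⟨⟨hf''hom, hf''L, hf''GE⟩, k₂, a₂, b₂, c₂, ha₂, ha₂GE, hdza₂, hinva₂,
    hb₂, hb₂GE, hdzb₂, hc₂L, h₂c, hc₂, hf''eq⟩
  exact NovProof.uniqueness hνA hz hf hge y hyL hyGE hgy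
    hf''GE hf'prop.2.2
    ha₂.2 (hdata.1.2) hb₂.2 hdata.2.2.2.2.1.2 hb₂GE hdata.2.2.2.2.2.1
    hdza₂ hdata.2.2.1 hdzb₂ hdata.2.2.2.2.2.2.1
    hc₂L.1 hdata.2.2.2.2.2.2.2.1.1
    h₂c hc₂ hdata.2.2.2.2.2.2.2.2.1 hdata.2.2.2.2.2.2.2.2.2.1
    hf''eq hdata.2.2.2.2.2.2.2.2.2.2
end
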